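/- arXiv:1110.5166 — 10 statements merged into one kernel-verified Lean document; each statement's English description precedes it below -/
import Mathlib

section
/- Let B be a basis of a matroid M, let x and y be distinct elements not in B, and suppose b ∈ C(x,B) ∩ C(y,B), where C(z,B) denotes the unique (fundamental) circuit contained in B + z. Then B_{b,x} := B - b + x is a basis, and the fundamental circuit of y with respect to B_{b,x} satisfies C(x,B) △ C(y,B) ⊆ C(y, B_{b,x}) ⊆ C(x,B) ∪ C(y,B), where △ denotes symmetric difference. -/
open Set

variable {α : Type*}

/-- A circuit: a minimal dependent set. -/
def IsCircuit (M : Matroid α) (C : Set α) : Prop :=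
  M.Dep C ∧ ∀ D, D ⊂ C → M.Indep D

/-- `C` is the fundamental circuit of `x` with respect to the basis `B`:
the unique circuit contained in `B ∪ {x}`. -/
def IsFundCct (M : Matroid α) (C : Set α) (x : α) (B : Set α) : Prop :=
  IsCircuit M C ∧ x ∈ C ∧ C ⊆ insert x B

/-- `SymEx M a A B` : the elements `b ∈ B` such that `A - a + b` and `B - b + a` are bases. -/
def SymEx (M : Matroid α) (a : α) (A B : Set α) : Set α :=
  {b ∈ B | M.IsBase (insert b (A \ {a})) ∧ M.IsBase (insert a (B \ {b}))}

/-- `ConnEx M a a' A B` : the elements `b ∈ B` such that `A - a' + b` and `B - b + a` are bases. -/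
def ConnEx (M : Matroid α) (a a' : α) (A B : Set α) : Set α :=
  {b ∈ B | M.IsBase (insert b (A \ {a'})) ∧ M.IsBase (insert a (B \ {b}))}

/-- A binary matroid, via the circuit characterization: the symmetric difference of
any two distinct circuits contains a circuit. -/
def Binary (M : Matroid α) : Prop :=
  ∀ C₁ C₂, IsCircuit M C₁ → IsCircuit M C₂ → C₁ ≠ C₂ →
    ∃ C, IsCircuit M C ∧ C ⊆ symmDiff C₁ C₂

/-- A hyperplane: a maximal proper flat. -/
def IsHyperplane (M : Matroid α) (H : Set α) : Prop :=
  M.IsFlat H ∧ H ≠ M.E ∧ ∀ F, M.IsFlat F → H ⊂ F → F = M.E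

section Aux

variable {M : Matroid α} {B C C₁ C₂ D : Set α} {e f : α}

lemma IsCircuit.dep (hC : IsCircuit M C) : M.Dep C := hC.1

lemma IsCircuit.subset_ground (hC : IsCircuit M C) : C ⊆ M.E := hC.1.subset_ground

lemma IsCircuit.diff_singleton_indep (hC : IsCircuit M C) (he : e ∈ C) :
    M.Indep (C \ {e}) :=
  hC.2 _ (sdiff_singleton_ssubset.mpr he)

lemma IsCircuit.mem_of_subset_insert_indep (hC : IsCircuit M C) (hI : M.Indep B)
    (hCB : C ⊆ insert e B) : e ∈ C := by
  by_contra h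
  have : C ⊆ B := fun z hz => ((hCB hz).resolve_left (fun h' => h (h' ▸ hz)))
  exact hC.dep.not_indep (hI.subset this)

/-- Every dependent set in a finite matroid contains a circuit. -/
lemma exists_circuit_subset_of_dep [M.Finite] (hD : M.Dep D) :
    ∃ C, C ⊆ D ∧ IsCircuit M C := by
  have hDfin : D.Finite := M.set_finite D hD.subset_ground
  obtain ⟨n, hn⟩ : ∃ n, D.ncard = n := ⟨_, rfl⟩
  clear hDfin
  induction n using Nat.strong_induction_on generalizing D with
  | _ n ih =>
    by_cases h : ∀ D', D' ⊂ D → M.Indep D'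
    · exact ⟨D, Subset.rfl, hD, h⟩
    push_neg at h
    obtain ⟨D', hss, hdep⟩ := h
    have hD'E : D' ⊆ M.E := hss.subset.trans hD.subset_ground
    have hdep' : M.Dep D' := Matroid.dep_of_not_indep hdep hD'E
    have hfin : D.Finite := M.set_finite D hD.subset_ground
    obtain ⟨C, hCD, hC⟩ := ih D'.ncard (hn ▸ Set.ncard_lt_ncard hss hfin) hdep' rfl
    exact ⟨C, hCD.trans hss.subset, hC⟩

lemma exists_mem_diff_of_circuits_ne (h₁ : IsCircuit M C₁) (h₂ : IsCircuit M C₂)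
    (hne : C₁ ≠ C₂) : ∃ f, f ∈ C₁ \ C₂ := by
  by_contra h
  push_neg at h
  simp only [mem_diff, not_and, not_not] at h
  have hss : C₁ ⊂ C₂ := HasSubset.Subset.ssubset_of_ne (fun z hz => h z hz) hne
  exact h₁.dep.not_indep (h₂.2 _ hss)

/-- Weak circuit elimination. -/
lemma circuit_elim [M.Finite] (h₁ : IsCircuit M C₁) (h₂ : IsCircuit M C₂)
    (hne : C₁ ≠ C₂) (he₁ : e ∈ C₁) (he₂ : e ∈ C₂) : M.Dep ((C₁ ∪ C₂) \ {e}) := by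
  set X := C₁ ∪ C₂ with hX
  have hXE : X ⊆ M.E := union_subset h₁.subset_ground h₂.subset_ground
  have hXfin : X.Finite := M.set_finite X hXE
  by_contra hind
  have hDind : M.Indep (X \ {e}) :=
    Matroid.indep_of_not_dep hind (diff_subset.trans hXE)
  obtain ⟨f, hf₁, hf₂⟩ := exists_mem_diff_of_circuits_ne h₁ h₂ hne
  have hef : e ≠ f := fun h => hf₂ (h ▸ he₂)
  -- extend C₁ \ {f} to a basis I of X
  obtain ⟨I, hI, hsub⟩ := (h₁.diff_singleton_indep hf₁).subset_isBasis_of_subset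
    (diff_subset.trans subset_union_left) hXE
  have hfI : f ∉ I := by
    intro hfI
    have : C₁ ⊆ I := by
      intro z hz
      rcases eq_or_ne z f with rfl | hzf
      · exact hfI
      · exact hsub ⟨hz, hzf⟩
    exact h₁.dep.not_indep (hI.indep.subset this)
  obtain ⟨g, hgC₂, hgI⟩ : ∃ g, g ∈ C₂ ∧ g ∉ I := by
    by_contra h
    push_neg at h
    exact h₂.dep.not_indep (hI.indep.subset h)
  have hgf : g ≠ f := fun h => hf₂ (h ▸ hgC₂)
  -- extend X \ {e} to a basis J of X
  obtain ⟨J, hJ, hsubJ⟩ := Matroid.Indep.subset_isBasis_of_subset hDind diff_subset hXE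
  have hcard : I.ncard = J.ncard := by
    have := hI.encard_eq_encard hJ
    rw [Set.ncard_def, Set.ncard_def, this]
  have hIsub : I ⊆ (X \ {f}) \ {g} := by
    intro z hz
    exact ⟨⟨hI.subset hz, fun h => hfI (h ▸ hz)⟩, fun h => hgI (h ▸ hz)⟩
  have hfX : f ∈ X := Or.inl hf₁
  have hgX : g ∈ X \ {f} := ⟨Or.inr hgC₂, hgf⟩
  have hItop : I.ncard ≤ X.ncard - 2 := by
    calc I.ncard ≤ ((X \ {f}) \ {g}).ncard :=
          Set.ncard_le_ncard hIsub hXfin.diff.diff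
      _ = X.ncard - 2 := by
          rw [Set.ncard_diff_singleton_of_mem hgX,
            Set.ncard_diff_singleton_of_mem hfX]
          omega
  have hJbot : X.ncard - 1 ≤ J.ncard := by
    have heX : e ∈ X := Or.inl he₁
    calc X.ncard - 1 = (X \ {e}).ncard := by
          rw [Set.ncard_diff_singleton_of_mem heX]
      _ ≤ J.ncard := Set.ncard_le_ncard hsubJ (hXfin.subset hJ.subset)
  have h2 : 2 ≤ X.ncard := by
    have : ({e, f} : Set α) ⊆ X := by
      intro z hz
      rcases hz with rfl | rfl
      · exact Or.inl he₁
      · exact hfX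
    calc 2 = ({e, f} : Set α).ncard := (Set.ncard_pair hef).symm
      _ ≤ X.ncard := Set.ncard_le_ncard this hXfin
  omega

/-- Strong circuit elimination. -/
lemma circuit_strong_elim [M.Finite] :
    ∀ n (C₁ C₂ : Set α) (e f : α), (C₁ ∪ C₂).ncard = n →
    IsCircuit M C₁ → IsCircuit M C₂ → e ∈ C₁ → e ∈ C₂ → f ∈ C₁ → f ∉ C₂ →
    ∃ C, IsCircuit M C ∧ f ∈ C ∧ C ⊆ (C₁ ∪ C₂) \ {e} := by
  intro n
  induction n using Nat.strong_induction_on with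
  | _ n ih =>
    intro C₁ C₂ e f hn h₁ h₂ he₁ he₂ hf₁ hf₂
    have hne : C₁ ≠ C₂ := fun h => hf₂ (h ▸ hf₁)
    have hXfin : (C₁ ∪ C₂).Finite :=
      M.set_finite _ (union_subset h₁.subset_ground h₂.subset_ground)
    obtain ⟨C₃, hC₃sub, hC₃⟩ :=
      exists_circuit_subset_of_dep (circuit_elim h₁ h₂ hne he₁ he₂)
    by_cases hfC₃ : f ∈ C₃
    · exact ⟨C₃, hC₃, hfC₃, hC₃sub⟩
    -- find g ∈ C₃ ∩ (C₂ \ C₁)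
    obtain ⟨g, hgC₃, hgC₂, hgC₁⟩ : ∃ g, g ∈ C₃ ∧ g ∈ C₂ ∧ g ∉ C₁ := by
      by_contra h
      push_neg at h
      have hss : C₃ ⊂ C₁ := by
        refine ssubset_of_subset_of_ne ?_ ?_
        · intro z hz
          obtain ⟨hzX, hze⟩ := hC₃sub hz
          rcases hzX with hz₁ | hz₂
          · exact hz₁
          · by_contra hz₁
            exact hz₁ (h z hz hz₂)
        · intro hEq
          rw [hEq] at hC₃sub
          exact (hC₃sub he₁).2 rfl
      exact hC₃.dep.not_indep (h₁.2 _ hss)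
    have heC₃ : e ∉ C₃ := fun h => (hC₃sub h).2 rfl
    -- IH on (C₂, C₃) eliminating g, keeping e
    have hsub23 : C₂ ∪ C₃ ⊆ (C₁ ∪ C₂) \ {f} := by
      intro z hz
      rcases hz with hz | hz
      · exact ⟨Or.inr hz, fun h => hf₂ (h ▸ hz)⟩
      · obtain ⟨hzX, _⟩ := hC₃sub hz
        exact ⟨hzX, fun h => hfC₃ (h ▸ hz)⟩
    have hlt1 : (C₂ ∪ C₃).ncard < n := by
      rw [← hn]
      exact Set.ncard_lt_ncard
        (hsub23.trans_ssubset (sdiff_singleton_ssubset.mpr (Or.inl hf₁))) hXfin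
    obtain ⟨C₄, hC₄, heC₄, hC₄sub⟩ :=
      ih _ hlt1 C₂ C₃ g e rfl h₂ hC₃ hgC₂ hgC₃ he₂ heC₃
    have hC₄X : C₄ ⊆ C₁ ∪ C₂ := by
      intro z hz
      obtain ⟨hz', _⟩ := hC₄sub hz
      rcases hz' with hz' | hz'
      · exact Or.inr hz'
      · exact (hC₃sub hz').1
    have hgC₄ : g ∉ C₄ := fun h => (hC₄sub h).2 rfl
    have hfC₄ : f ∉ C₄ := by
      intro h
      rcases (hC₄sub h).1 with h' | h'
      · exact hf₂ h'
      · exact hfC₃ h'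
    -- IH on (C₁, C₄) eliminating e, keeping f
    have hsub14 : C₁ ∪ C₄ ⊆ (C₁ ∪ C₂) \ {g} := by
      intro z hz
      rcases hz with hz | hz
      · exact ⟨Or.inl hz, fun h => hgC₁ (h ▸ hz)⟩
      · exact ⟨hC₄X hz, fun h => hgC₄ (h ▸ hz)⟩
    have hlt2 : (C₁ ∪ C₄).ncard < n := by
      rw [← hn]
      exact Set.ncard_lt_ncard
        (hsub14.trans_ssubset (sdiff_singleton_ssubset.mpr (Or.inr hgC₂))) hXfin
    obtain ⟨C₅, hC₅, hfC₅, hC₅sub⟩ :=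
      ih _ hlt2 C₁ C₄ e f rfl h₁ hC₄ he₁ heC₄ hf₁ hfC₄
    refine ⟨C₅, hC₅, hfC₅, ?_⟩
    intro z hz
    obtain ⟨hz', hze⟩ := hC₅sub hz
    rcases hz' with hz' | hz'
    · exact ⟨Or.inl hz', hze⟩
    · exact ⟨hC₄X hz', hze⟩

/-- Uniqueness of the circuit contained in `insert e B` for a base `B`. -/
lemma circuit_unique_insert_base [M.Finite] (hB : M.IsBase B) (hC : IsCircuit M C)
    (hC' : IsCircuit M C₁) (hCB : C ⊆ insert e B) (hC'B : C₁ ⊆ insert e B) : C = C₁ := by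
  by_contra hne
  have heC : e ∈ C := hC.mem_of_subset_insert_indep hB.indep hCB
  have heC' : e ∈ C₁ := hC'.mem_of_subset_insert_indep hB.indep hC'B
  have hdep := circuit_elim hC hC' hne heC heC'
  have hsub : (C ∪ C₁) \ {e} ⊆ B := by
    rintro z ⟨hz, hze⟩
    rcases hz with hz | hz
    · exact (hCB hz).resolve_left hze
    · exact (hC'B hz).resolve_left hze
  exact hdep.not_indep (hB.indep.subset hsub)

end Aux

theorem stmt_0 (M : Matroid α) [M.Finite] {B Cx Cy : Set α} {x y b : α}
    (hB : M.IsBase B) (hx : x ∉ B) (hy : y ∉ B) (hxy : x ≠ y)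
    (hCx : IsFundCct M Cx x B) (hCy : IsFundCct M Cy y B)
    (hbx : b ∈ Cx) (hby : b ∈ Cy) :
    M.IsBase (insert x (B \ {b})) ∧
      ∀ Cy', IsFundCct M Cy' y (insert x (B \ {b})) →
        symmDiff Cx Cy ⊆ Cy' ∧ Cy' ⊆ Cx ∪ Cy := by
  obtain ⟨hCxc, hxCx, hCxB⟩ := hCx
  obtain ⟨hCyc, hyCy, hCyB⟩ := hCy
  have hbB : b ∈ B := by
    rcases hCxB hbx with rfl | h
    · rcases hCyB hby with h' | h'
      · exact absurd h' hxy
      · exact h'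
    · exact h
  have hbx' : b ≠ x := fun h => hx (h ▸ hbB)
  have hby' : b ≠ y := fun h => hy (h ▸ hbB)
  have hxCy : x ∉ Cy := fun h => (hCyB h).elim (fun h' => hxy h') hx
  have hyCx : y ∉ Cx := fun h => (hCxB h).elim (fun h' => hxy h'.symm) hy
  have hCne : Cx ≠ Cy := fun h => hxCy (h ▸ hxCx)
  have hxE : x ∈ M.E := hCxc.subset_ground hxCx
  -- B' = insert x (B \ {b}) is a base
  have hB'ind : M.Indep (insert x (B \ {b})) := by
    rw [← M.not_dep_iff (insert_subset hxE (diff_subset.trans hB.subset_ground))]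
    intro hdep
    obtain ⟨C, hCsub, hCc⟩ := exists_circuit_subset_of_dep hdep
    have hCB : C ⊆ insert x B := hCsub.trans (insert_subset_insert diff_subset)
    have : C = Cx := circuit_unique_insert_base hB hCc hCxc hCB hCxB
    have hbC : b ∉ C := by
      intro h
      rcases hCsub h with h' | h'
      · exact hbx' h'
      · exact h'.2 rfl
    exact hbC (this ▸ hbx)
  have hB' : M.IsBase (insert x (B \ {b})) :=
    hB.exchange_isBase_of_indep hx hB'ind
  refine ⟨hB', ?_⟩
  intro Cy' hCy'
  obtain ⟨hCy'c, hyCy', hCy'B'⟩ := hCy'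
  set B' := insert x (B \ {b}) with hB'def
  have hbB' : b ∉ insert y B' := by
    rintro (h | h | h)
    · exact hby' h
    · exact hbx' h
    · exact h.2 rfl
  have hbCy' : b ∉ Cy' := fun h => hbB' (hCy'B' h)
  -- upper bound
  have hdep := circuit_elim hCxc hCyc hCne hbx hby
  obtain ⟨C₀, hC₀sub, hC₀⟩ := exists_circuit_subset_of_dep hdep
  have hC₀B' : C₀ ⊆ insert y B' := by
    intro z hz
    obtain ⟨hz', hzb⟩ := hC₀sub hz
    rcases hz' with hz' | hz'
    · rcases hCxB hz' with rfl | h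
      · exact Or.inr (Or.inl rfl)
      · exact Or.inr (Or.inr ⟨h, hzb⟩)
    · rcases hCyB hz' with rfl | h
      · exact Or.inl rfl
      · exact Or.inr (Or.inr ⟨h, hzb⟩)
  have hC₀eq : C₀ = Cy' := circuit_unique_insert_base hB' hC₀ hCy'c hC₀B' hCy'B'
  have hupper : Cy' ⊆ Cx ∪ Cy := hC₀eq ▸ (hC₀sub.trans diff_subset)
  -- x ∈ Cy'
  have hxCy' : x ∈ Cy' := by
    by_contra hxn
    have hCy'B : Cy' ⊆ insert y B := by
      intro z hz
      rcases hCy'B' hz with rfl | rfl | h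
      · exact Or.inl rfl
      · exact absurd hz hxn
      · exact Or.inr h.1
    have : Cy' = Cy := circuit_unique_insert_base hB hCy'c hCyc hCy'B hCyB
    exact hbCy' (this ▸ hby)
  refine ⟨?_, hupper⟩
  -- lower bound
  intro f hf
  rw [Set.mem_symmDiff] at hf
  rcases hf with ⟨hfCx, hfCy⟩ | ⟨hfCy, hfCx⟩
  · by_contra hfCy'
    have hfx : f ≠ x := fun h => hfCy' (h ▸ hxCy')
    obtain ⟨C, hCc, hfC, hCsub⟩ := circuit_strong_elim (Cx ∪ Cy').ncard Cx Cy' x f rfl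
      hCxc hCy'c hxCx hxCy' hfCx hfCy'
    have hCB : C ⊆ insert y B := by
      intro z hz
      obtain ⟨hz', hzx⟩ := hCsub hz
      rcases hz' with hz' | hz'
      · exact Or.inr ((hCxB hz').resolve_left hzx)
      · rcases hupper hz' with h | h
        · exact Or.inr ((hCxB h).resolve_left hzx)
        · rcases hCyB h with rfl | h'
          · exact Or.inl rfl
          · exact Or.inr h'
    have : C = Cy := circuit_unique_insert_base hB hCc hCyc hCB hCyB
    exact hfCy (this ▸ hfC)
  · by_contra hfCy'
    have hfy : f ≠ y := fun h => hfCy' (h ▸ hyCy')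
    obtain ⟨C, hCc, hfC, hCsub⟩ := circuit_strong_elim (Cy ∪ Cy').ncard Cy Cy' y f rfl
      hCyc hCy'c hyCy hyCy' hfCy hfCy'
    have hCB : C ⊆ insert x B := by
      intro z hz
      obtain ⟨hz', hzy⟩ := hCsub hz
      rcases hz' with hz' | hz'
      · exact Or.inr ((hCyB hz').resolve_left hzy)
      · rcases hupper hz' with h | h
        · rcases hCxB h with rfl | h'
          · exact Or.inl rfl
          · exact Or.inr h'
        · exact Or.inr ((hCyB h).resolve_left hzy)
    have : C = Cx := circuit_unique_insert_base hB hCc hCxc hCB hCxB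
    exact hfCx (this ▸ hfC)
end

section
/- Let A and B be disjoint bases of a block matroid M (ground set A ∪ B) and let a ∈ A. Then Sym(a,A,B) = (C(a,B) ∩ C*(a,B)) - a, where Sym(a,A,B) = {b ∈ B : A - a + b and B - b + a are both bases}. -/
open Set

variable {α : Type*}

lemma key (M : Matroid α) {B C : Set α} {a b : α}
    (hB : M.IsBase B) (haE : a ∈ M.E) (haB : a ∉ B) (hC : IsFundCct M C a B) (hb : b ∈ B) :
    M.IsBase (insert a (B \ {b})) ↔ b ∈ C := by
  obtain ⟨⟨hCdep, hCmin⟩, haC, hCsub⟩ := hC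
  constructor
  · intro hbase
    by_contra hbC
    have hsub : C ⊆ insert a (B \ {b}) := by
      intro x hx
      rcases hCsub hx with h | h
      · exact Or.inl h
      · exact Or.inr ⟨h, fun hxb => hbC (hxb ▸ hx)⟩
    exact (hbase.indep.subset hsub).not_dep hCdep
  · intro hbC
    have hCb_indep : M.Indep (C \ {b}) :=
      hCmin _ (sdiff_singleton_ssubset.2 hbC)
    have hb_cl : b ∈ M.closure (C \ {b}) := by
      rw [hCb_indep.mem_closure_iff_of_notMem (by simp)]
      rwa [insert_diff_singleton, insert_eq_of_mem hbC]
    have hBb_indep : M.Indep (B \ {b}) := hB.indep.subset diff_subset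
    have ha_ncl : a ∉ M.closure (B \ {b}) := by
      intro ha_cl
      have hsub : C \ {b} ⊆ M.closure (B \ {b}) := by
        intro x hx
        rcases hCsub hx.1 with h | h
        · exact h ▸ ha_cl
        · exact M.subset_closure _ hBb_indep.subset_ground ⟨h, hx.2⟩
      have : M.closure (C \ {b}) ⊆ M.closure (B \ {b}) := by
        have := M.closure_subset_closure_of_subset_closure hsub
        rwa [] at this
      exact hB.indep.notMem_closure_diff_of_mem hb (this hb_cl)
    have hindep : M.Indep (insert a (B \ {b})) := by
      rw [hBb_indep.insert_indep_iff_of_notMem (fun h => haB h.1)]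
      exact ⟨haE, ha_ncl⟩
    have hab : a ≠ b := fun h => haB (h ▸ hb)
    have := hB.exchange_isBase_of_indep' hb haB (by rwa [← insert_diff_singleton_comm hab])
    rwa [← insert_diff_singleton_comm hab] at this

theorem stmt_3 (M : Matroid α) [M.Finite] {A B Ca Cs : Set α} {a : α}
    (hA : M.IsBase A) (hB : M.IsBase B) (hAB : Disjoint A B) (hE : M.E = A ∪ B)
    (ha : a ∈ A) (hCa : IsFundCct M Ca a B) (hCs : IsFundCct M✶ Cs a B) :
    SymEx M a A B = (Ca ∩ Cs) \ {a} := by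
  have haB : a ∉ B := disjoint_left.1 hAB ha
  have haE : a ∈ M.E := hE ▸ Or.inl ha
  have hEA : M.E \ A = B := by
    rw [hE, union_diff_left, hAB.sdiff_eq_right]
  have hBd : M✶.IsBase B := hEA ▸ hA.compl_isBase_dual
  have hd : ∀ x, x ∈ A → x ∉ B := fun x hx => disjoint_left.1 hAB hx
  have hBE : B ⊆ M.E := hE ▸ subset_union_right
  ext b
  simp only [SymEx, mem_setOf_eq, mem_diff, mem_inter_iff, mem_singleton_iff]
  constructor
  · rintro ⟨hbB, h1, h2⟩
    have hcompl : M.E \ insert a (B \ {b}) = insert b (A \ {a}) := by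
      have hba : b ≠ a := fun h => haB (h ▸ hbB)
      ext x
      simp only [hE, mem_diff, mem_union, mem_insert_iff, mem_singleton_iff]
      constructor
      · rintro ⟨hx1 | hx1, hx2⟩
        · exact Or.inr ⟨hx1, fun h => hx2 (Or.inl h)⟩
        · by_cases hxb : x = b
          · exact Or.inl hxb
          · exact absurd (Or.inr ⟨hx1, hxb⟩) hx2
      · rintro (rfl | ⟨hx1, hx2⟩)
        · exact ⟨Or.inr hbB, by simp [hba]⟩
        · exact ⟨Or.inl hx1, by simp [hx2, hd x hx1]⟩
    have hsub : insert a (B \ {b}) ⊆ M.E :=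
      insert_subset haE (diff_subset.trans hBE)
    have hdual : M✶.IsBase (insert a (B \ {b})) := by
      rw [Matroid.dual_isBase_iff hsub, hcompl]; exact h1
    refine ⟨⟨(key M hB haE haB hCa hbB).1 h2,
      (key M✶ hBd haE haB hCs hbB).1 hdual⟩, fun h => haB (h ▸ hbB)⟩
  · rintro ⟨⟨hca, hcs⟩, hba⟩
    have hbB : b ∈ B := by
      rcases hCa.2.2 hca with h | h
      · exact absurd h hba
      · exact h
    have h2 : M.IsBase (insert a (B \ {b})) := (key M hB haE haB hCa hbB).2 hca
    have hdual : M✶.IsBase (insert a (B \ {b})) := (key M✶ hBd haE haB hCs hbB).2 hcs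
    have hcompl : M.E \ insert a (B \ {b}) = insert b (A \ {a}) := by
      ext x
      simp only [hE, mem_diff, mem_union, mem_insert_iff, mem_singleton_iff]
      constructor
      · rintro ⟨hx1 | hx1, hx2⟩
        · exact Or.inr ⟨hx1, fun h => hx2 (Or.inl h)⟩
        · by_cases hxb : x = b
          · exact Or.inl hxb
          · exact absurd (Or.inr ⟨hx1, hxb⟩) hx2
      · rintro (rfl | ⟨hx1, hx2⟩)
        · exact ⟨Or.inr hbB, by simp [hba]⟩
        · exact ⟨Or.inl hx1, by simp [hx2, hd x hx1]⟩
    have hsub : insert a (B \ {b}) ⊆ M.E :=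
      insert_subset haE (diff_subset.trans hBE)
    rw [Matroid.dual_isBase_iff hsub, hcompl] at hdual
    exact ⟨hbB, hdual, h2⟩
end

section
/- Let A and B be disjoint bases of a block matroid M (ground set A ∪ B) and let a, a' be distinct elements of A. Then Conn(a,a',A,B) = C(a,B) ∩ C*(a',B), where Conn(a,a',A,B) = {b ∈ B : A - a' + b and B - b + a are bases}. -/
open Set

variable {α : Type*}

lemma fund_mem_iff {N : Matroid α} {B C : Set α} {x b : α} (hB : N.IsBase B) (hx : x ∉ B)
    (hxE : x ∈ N.E) (hC : IsFundCct N C x B) (hb : b ∈ B) :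
    b ∈ C ↔ N.IsBase (insert x (B \ {b})) := by
  obtain ⟨⟨hCdep, hmin⟩, hxC, hCB⟩ := hC
  have hxb : x ∉ B \ {b} := fun h => hx h.1
  have hIind : N.Indep (B \ {b}) := hB.indep.subset diff_subset
  have hbase : N.IsBase (insert x (B \ {b})) ↔ x ∉ N.closure (B \ {b}) := by
    constructor
    · intro h
      exact ((hIind.insert_indep_iff_of_notMem hxb).mp h.indep).2
    · intro h
      exact hB.exchange_isBase_of_indep hx
        ((hIind.insert_indep_iff_of_notMem hxb).mpr ⟨hxE, h⟩)
  rw [hbase]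
  constructor
  · intro hbC hcl
    have hCb : N.Indep (C \ {b}) := hmin _ (sdiff_singleton_ssubset.mpr hbC)
    have hbcl : b ∈ N.closure (C \ {b}) := by
      have : N.Dep (insert b (C \ {b})) := by
        rwa [insert_diff_singleton, insert_eq_self.mpr hbC]
      exact ((hCb.insert_dep_iff).mp this).1
    have hsub : C \ {b} ⊆ insert x (B \ {b}) := by
      intro y hy
      rcases hCB hy.1 with h | h
      · exact h ▸ mem_insert _ _
      · exact mem_insert_of_mem _ ⟨h, hy.2⟩
    have h1 : b ∈ N.closure (insert x (B \ {b})) :=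
      N.closure_subset_closure hsub hbcl
    have h2 : N.closure (insert x (B \ {b})) ⊆ N.closure (B \ {b}) :=
      Matroid.closure_subset_closure_of_subset_closure
        (insert_subset hcl (N.subset_closure _ hIind.subset_ground))
    have : b ∈ N.closure (B \ {b}) := h2 h1
    rw [hIind.mem_closure_iff] at this
    rcases this with h | h
    · rw [insert_diff_singleton, insert_eq_self.mpr hb] at h
      exact h.not_indep hB.indep
    · exact h.2 rfl
  · intro h
    by_contra hbC
    apply h
    have hsub : C \ {x} ⊆ B \ {b} := by
      intro y hy
      rcases hCB hy.1 with h' | h'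
      · exact (hy.2 h').elim
      · exact ⟨h', fun h'' => hbC (h'' ▸ hy.1)⟩
    have hCx : N.Indep (C \ {x}) := hmin _ (sdiff_singleton_ssubset.mpr hxC)
    have : x ∈ N.closure (C \ {x}) := by
      have : N.Dep (insert x (C \ {x})) := by
        rwa [insert_diff_singleton, insert_eq_self.mpr hxC]
      exact ((hCx.insert_dep_iff).mp this).1
    exact N.closure_subset_closure hsub this

theorem stmt_4 (M : Matroid α) [M.Finite] {A B Ca Cs' : Set α} {a a' : α}
    (hA : M.IsBase A) (hB : M.IsBase B) (hAB : Disjoint A B) (hE : M.E = A ∪ B)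
    (ha : a ∈ A) (ha' : a' ∈ A) (hne : a ≠ a')
    (hCa : IsFundCct M Ca a B) (hCs' : IsFundCct M✶ Cs' a' B) :
    ConnEx M a a' A B = Ca ∩ Cs' := by
  have hdj : ∀ y ∈ A, y ∉ B := fun y hy => (Set.disjoint_left.mp hAB) hy
  have haB : a ∉ B := hdj a ha
  have ha'B : a' ∉ B := hdj a' ha'
  have haE : a ∈ M.E := hE ▸ Or.inl ha
  have ha'E : a' ∈ M✶.E := by rw [Matroid.dual_ground]; exact hE ▸ Or.inl ha'
  have hBE : B ⊆ M.E := hB.subset_ground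
  have hB' : M✶.IsBase B := by
    rw [Matroid.dual_isBase_iff hBE]
    have : M.E \ B = A := by rw [hE, union_diff_right]; exact hAB.sdiff_eq_left
    rwa [this]
  have key : ∀ b ∈ B, (M.IsBase (insert b (A \ {a'})) ↔ b ∈ Cs') := by
    intro b hb
    have hset : M.E \ insert a' (B \ {b}) = insert b (A \ {a'}) := by
      rw [hE]; ext y
      simp only [mem_diff, mem_union, mem_insert_iff, mem_singleton_iff]
      constructor
      · rintro ⟨hy1 | hy1, hy2⟩
        · exact Or.inr ⟨hy1, fun h => hy2 (Or.inl h)⟩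
        · push_neg at hy2
          exact Or.inl (hy2.2 hy1)
      · rintro (rfl | ⟨hy1, hy2⟩)
        · exact ⟨Or.inr hb, by push_neg; exact ⟨fun h => ha'B (h ▸ hb), fun _ => rfl⟩⟩
        · exact ⟨Or.inl hy1, by push_neg; exact ⟨hy2, fun h => (hdj y hy1 h).elim⟩⟩
    have hsub : insert a' (B \ {b}) ⊆ M.E :=
      insert_subset (by simpa using ha'E) (diff_subset.trans hBE)
    rw [fund_mem_iff hB' ha'B ha'E hCs' hb, Matroid.dual_isBase_iff hsub, hset]
  ext b
  simp only [ConnEx, mem_setOf_eq, mem_inter_iff]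
  constructor
  · rintro ⟨hb, h1, h2⟩
    exact ⟨(fund_mem_iff hB haB haE hCa hb).mpr h2, (key b hb).mp h1⟩
  · rintro ⟨h1, h2⟩
    have hb : b ∈ B := by
      rcases hCa.2.2 h1 with rfl | hb
      · rcases hCs'.2.2 h2 with h | h
        · exact (hne h).elim
        · exact h
      · exact hb
    exact ⟨hb, (key b hb).mpr h2, (fund_mem_iff hB haB haE hCa hb).mp h1⟩
end

section
/- For any two disjoint bases A and B of a matroid M and any two distinct elements a, a' ∈ A, the set Conn(a,a',A,B) = {b ∈ B : A - a' + b and B - b + a are bases} does not have cardinality exactly 1. -/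
open Set

variable {α : Type*}

lemma fund_aux {M : Matroid α} {B : Set α} {a : α} (hB : M.Indep B) (hBfin : B.Finite)
    (ha : a ∈ M.closure B) :
    a ∈ M.closure {b ∈ B | a ∉ M.closure (B \ {b})} := by
  set Y : Set α := {b ∈ B | a ∉ M.closure (B \ {b})} with hY
  suffices h : ∀ n : ℕ, ∀ S : Set α, S ⊆ B → S.ncard ≤ n → a ∈ M.closure S → a ∈ M.closure Y by
    exact h B.ncard B Subset.rfl le_rfl ha
  intro n
  induction n with
  | zero =>
    intro S hSB hcard haS
    have hSfin : S.Finite := hBfin.subset hSB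
    have : S = ∅ := by
      rw [← Set.ncard_eq_zero hSfin]; omega
    subst this
    exact M.closure_subset_closure (empty_subset _) haS
  | succ n ih =>
    intro S hSB hcard haS
    have hSfin : S.Finite := hBfin.subset hSB
    by_cases hSY : S ⊆ Y
    · exact M.closure_subset_closure hSY haS
    obtain ⟨x, hxS, hxY⟩ := not_subset.mp hSY
    have hxB : x ∈ B := hSB hxS
    have haBx : a ∈ M.closure (B \ {x}) := by
      by_contra h
      exact hxY ⟨hxB, h⟩
    -- show a ∈ M.closure (S \ {x})
    have haSx : a ∈ M.closure (S \ {x}) := by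
      by_contra h
      -- closure exchange: a ∈ cl (insert x (S \ {x})) \ cl (S\{x}) ⇒ x ∈ cl (insert a (S\{x}))
      have h1 : a ∈ M.closure (insert x (S \ {x})) := by
        rwa [insert_diff_singleton, insert_eq_of_mem hxS]
      have h2 : x ∈ M.closure (insert a (S \ {x})) := Matroid.mem_closure_insert h h1
      have h3 : x ∈ M.closure (insert a (B \ {x})) :=
        M.closure_subset_closure (insert_subset_insert (diff_subset_diff_left hSB)) h2
      have h4 : M.closure (insert a (B \ {x})) = M.closure (B \ {x}) :=
        Matroid.closure_insert_eq_of_mem_closure haBx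
      rw [h4] at h3
      exact hB.notMem_closure_sdiff_of_mem hxB h3
    exact ih (S \ {x}) (diff_subset.trans hSB)
      (by have := Set.ncard_diff_singleton_lt_of_mem hxS hSfin; omega) haSx

theorem stmt_5 (M : Matroid α) [M.Finite] {A B : Set α} {a a' : α}
    (hA : M.IsBase A) (hB : M.IsBase B) (hAB : Disjoint A B)
    (ha : a ∈ A) (ha' : a' ∈ A) (hne : a ≠ a') :
    (ConnEx M a a' A B).encard ≠ 1 := by
  intro h1
  obtain ⟨b₀, hb0⟩ := Set.encard_eq_one.mp h1
  have hb0mem : b₀ ∈ ConnEx M a a' A B := by rw [hb0]; exact rfl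
  obtain ⟨hb0B, hbase1, hbase2⟩ := hb0mem
  have haB : a ∉ B := fun h => (hAB.ne_of_mem ha h) rfl
  have haE : a ∈ M.E := hA.subset_ground ha
  have hIA' : M.Indep (A \ {a'}) := hA.indep.subset diff_subset
  set H := M.closure (A \ {a'}) with hH
  have haH : a ∈ H := M.subset_closure _ hIA'.subset_ground ⟨ha, hne⟩
  have hb0H : b₀ ∉ H := by
    have hb0A : b₀ ∉ A \ {a'} := fun h => (hAB.ne_of_mem h.1 hb0B) rfl
    have := (hIA'.insert_indep_iff_of_notMem hb0A).mp hbase1.indep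
    exact this.2
  have hab0 : a ∉ M.closure (B \ {b₀}) := by
    have haB' : a ∉ B \ {b₀} := fun h => haB h.1
    have := ((hB.indep.subset diff_subset).insert_indep_iff_of_notMem haB').mp hbase2.indep
    exact this.2
  set Y : Set α := {b ∈ B | a ∉ M.closure (B \ {b})} with hY
  have haY : a ∈ M.closure Y := by
    apply fund_aux hB.indep (M.set_finite B hB.subset_ground) (by rw [hB.closure_eq]; exact haE)
  have hYH : Y \ {b₀} ⊆ H := by
    rintro b ⟨⟨hbB, hbcl⟩, hbne⟩
    by_contra hbH
    have hbA : b ∉ A := fun h => (hAB.ne_of_mem h hbB) rfl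
    have hbA' : b ∉ A \ {a'} := fun h => hbA h.1
    have hbE : b ∈ M.E := hB.subset_ground hbB
    have hind1 : M.Indep (insert b (A \ {a'})) :=
      (hIA'.insert_indep_iff_of_notMem hbA').mpr ⟨hbE, hbH⟩
    have hba' : b ≠ a' := fun h => hbA (h ▸ ha')
    have hbase1' : M.IsBase (insert b (A \ {a'})) := by
      rw [insert_diff_singleton_comm hba']
      exact hA.exchange_isBase_of_indep' ha' hbA (by rwa [← insert_diff_singleton_comm hba'])
    have haB'' : a ∉ B \ {b} := fun h => haB h.1
    have hind2 : M.Indep (insert a (B \ {b})) :=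
      ((hB.indep.subset diff_subset).insert_indep_iff_of_notMem haB'').mpr ⟨haE, hbcl⟩
    have hab : a ≠ b := fun h => haB (h ▸ hbB)
    have hbase2' : M.IsBase (insert a (B \ {b})) := by
      rw [insert_diff_singleton_comm hab]
      exact hB.exchange_isBase_of_indep' hbB haB (by rwa [← insert_diff_singleton_comm hab])
    have : b ∈ ConnEx M a a' A B := ⟨hbB, hbase1', hbase2'⟩
    rw [hb0] at this
    exact hbne this
  have haY' : a ∉ M.closure (Y \ {b₀}) := fun h =>
    hab0 (M.closure_subset_closure (diff_subset_diff_left (sep_subset _ _)) h)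
  have h2 : a ∈ M.closure (insert b₀ (Y \ {b₀})) := by
    refine M.closure_subset_closure ?_ haY
    intro y hy
    by_cases hyb : y = b₀
    · exact hyb ▸ mem_insert _ _
    · exact mem_insert_of_mem _ ⟨hy, hyb⟩
  have h3 : b₀ ∈ M.closure (insert a (Y \ {b₀})) := Matroid.mem_closure_insert haY' h2
  have h4 : insert a (Y \ {b₀}) ⊆ H := insert_subset haH hYH
  have h5 : b₀ ∈ H := by
    have := M.closure_subset_closure h4 h3
    rwa [hH, M.closure_closure] at this
  exact hb0H h5
end

section
/- Let A and B be disjoint bases of a matroid M, let a ∈ A, and let b ∈ Sym(a,A,B), so A' := A - a + b and B' := B - b + a are bases. Let a' ∈ A - a. If b ∉ C(a',B) and a' ∉ C(b,A), then Sym(a', A', B') = Sym(a', A, B). -/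
open Set

variable {α : Type*}

private lemma exists_circuit_aux (M : Matroid α) [M.Finite] :
    ∀ n (X : Set α), X.ncard ≤ n → M.Dep X → ∃ C, C ⊆ X ∧ IsCircuit M C := by
  intro n
  induction n with
  | zero =>
    intro X hn hX
    have hfin : X.Finite := M.set_finite X hX.subset_ground
    have hne := hX.nonempty
    rw [Nat.le_zero, Set.ncard_eq_zero hfin] at hn
    simp [hn] at hne
  | succ n ih =>
    intro X hn hX
    by_cases h : ∀ D, D ⊂ X → M.Indep D
    · exact ⟨X, Subset.rfl, hX, h⟩
    push_neg at h
    obtain ⟨D, hDX, hD⟩ := h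
    have hfin : X.Finite := M.set_finite X hX.subset_ground
    have hDdep : M.Dep D := ⟨hD, hDX.subset.trans hX.subset_ground⟩
    have hlt := Set.ncard_lt_ncard hDX hfin
    obtain ⟨C, hCD, hC⟩ := ih D (by omega) hDdep
    exact ⟨C, hCD.trans hDX.subset, hC⟩

private lemma exists_circuit {M : Matroid α} [M.Finite] {X : Set α} (hX : M.Dep X) :
    ∃ C, C ⊆ X ∧ IsCircuit M C :=
  exists_circuit_aux M X.ncard X le_rfl hX

/-- Weak circuit elimination: the union of two distinct circuits minus a common element
is dependent. -/
private lemma dep_elim {M : Matroid α} [M.Finite] {C₁ C₂ : Set α} {e : α}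
    (h₁ : IsCircuit M C₁) (h₂ : IsCircuit M C₂) (hne : C₁ ≠ C₂)
    (he₁ : e ∈ C₁) (he₂ : e ∈ C₂) : ¬ M.Indep ((C₁ ∪ C₂) \ {e}) := by
  intro hind
  have hfC : ∃ f, f ∈ C₁ ∧ f ∉ C₂ := by
    by_contra h
    push_neg at h
    have hsub : C₁ ⊆ C₂ := fun x hx => h x hx
    exact (h₂.2 C₁ (hsub.ssubset_of_ne hne)).not_dep h₁.1
  obtain ⟨f, hfC₁, hfC₂⟩ := hfC
  have hef : e ≠ f := fun h => hfC₂ (h ▸ he₂)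
  have hIind : M.Indep (C₁ \ {f}) :=
    h₁.2 _ (Set.sdiff_singleton_ssubset.mpr hfC₁)
  have hXE : C₁ ∪ C₂ ⊆ M.E := union_subset h₁.1.subset_ground h₂.1.subset_ground
  have hXfin : (C₁ ∪ C₂).Finite := M.set_finite _ hXE
  obtain ⟨I, hI, hsubI⟩ := hIind.subset_isBasis_of_subset
    (diff_subset.trans subset_union_left) hXE
  have hfI : f ∉ I := by
    intro hfI
    refine h₁.1.not_indep (hI.indep.subset ?_)
    intro x hx
    rcases eq_or_ne x f with rfl | hxf
    · exact hfI
    · exact hsubI ⟨hx, hxf⟩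
  have hgEx : ∃ g, g ∈ C₂ ∧ g ∉ I := by
    by_contra h
    push_neg at h
    exact h₂.1.not_indep (hI.indep.subset fun x hx => h x hx)
  obtain ⟨g, hgC₂, hgI⟩ := hgEx
  have hfg : f ≠ g := fun h => hfC₂ (h ▸ hgC₂)
  have hIsub : I ⊆ (C₁ ∪ C₂) \ {f, g} := by
    intro x hx
    refine ⟨hI.subset hx, ?_⟩
    intro hm
    rcases hm with rfl | rfl
    · exact hfI hx
    · exact hgI hx
  obtain ⟨J, hJ, hsubJ⟩ := hind.subset_isBasis_of_subset diff_subset hXE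
  have hIJ : I.ncard = J.ncard := by
    have := hI.encard_eq_encard hJ
    rw [Set.ncard_def, Set.ncard_def, this]
  have h1 : I.ncard ≤ (C₁ ∪ C₂).ncard - 2 := by
    have hle := Set.ncard_le_ncard hIsub (hXfin.diff (t := {f, g}))
    rwa [Set.ncard_diff (insert_subset (mem_union_left _ hfC₁)
      (singleton_subset_iff.mpr (mem_union_right _ hgC₂))),
      Set.ncard_pair hfg] at hle
  have h2 : (C₁ ∪ C₂).ncard - 1 ≤ J.ncard := by
    have hle := Set.ncard_le_ncard hsubJ (hXfin.subset hJ.subset)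
    rwa [Set.ncard_diff (singleton_subset_iff.mpr (mem_union_left _ he₁)),
      Set.ncard_singleton] at hle
  have h3 : 2 ≤ (C₁ ∪ C₂).ncard := by
    have hle := Set.ncard_le_ncard (insert_subset (mem_union_left _ he₁)
      (singleton_subset_iff.mpr (mem_union_left _ hfC₁))) hXfin
    rwa [Set.ncard_pair hef] at hle
  omega

/-- Key exchange lemma: if `C` is a circuit through `p` and `q` with `C \ {q} ⊆ T`
for a base `T` with `p ∈ T`, `q ∉ T`, then `T - p + q` is a base. -/
private lemma key_s6 {M : Matroid α} [M.Finite] {T C : Set α} {p q : α}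
    (hT : M.IsBase T) (hC : IsCircuit M C) (hq : q ∈ C) (hp : p ∈ C)
    (hCT : C \ {q} ⊆ T) (hpT : p ∈ T) (hqT : q ∉ T) (hqE : q ∈ M.E) :
    M.IsBase (insert q (T \ {p})) := by
  have hpq : p ≠ q := fun h => hqT (h ▸ hpT)
  have hind : M.Indep (insert q (T \ {p})) := by
    rw [← M.not_dep_iff (insert_subset hqE (diff_subset.trans hT.subset_ground))]
    intro hdep
    obtain ⟨D, hDsub, hD⟩ := exists_circuit hdep
    have hqD : q ∈ D := by
      by_contra hqD
      refine hD.1.not_indep (hT.indep.subset ?_)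
      intro x hx
      rcases mem_insert_iff.mp (hDsub hx) with rfl | hx2
      · exact absurd hx hqD
      · exact hx2.1
    have hDC : D ≠ C := by
      intro h
      rcases mem_insert_iff.mp (hDsub (h ▸ hp)) with h' | h'
      · exact hpq h'
      · exact h'.2 rfl
    refine dep_elim hD hC hDC hqD hq (hT.indep.subset ?_)
    intro x hx
    obtain ⟨hx1, hx2⟩ := hx
    rw [mem_singleton_iff] at hx2
    rcases hx1 with hxD | hxC
    · rcases mem_insert_iff.mp (hDsub hxD) with rfl | h
      · exact absurd rfl hx2
      · exact h.1
    · exact hCT ⟨hxC, hx2⟩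
  exact hT.exchange_isBase_of_indep hqT hind

theorem stmt_6 (M : Matroid α) [M.Finite] {A B Ca' Cb : Set α} {a a' b : α}
    (hA : M.IsBase A) (hB : M.IsBase B) (hAB : Disjoint A B)
    (ha : a ∈ A) (hb : b ∈ SymEx M a A B)
    (ha' : a' ∈ A) (hne : a' ≠ a)
    (hCa' : IsFundCct M Ca' a' B) (hCb : IsFundCct M Cb b A)
    (h1 : b ∉ Ca') (h2 : a' ∉ Cb) :
    SymEx M a' (insert b (A \ {a})) (insert a (B \ {b})) = SymEx M a' A B := by
  obtain ⟨hbB, hA', hB'⟩ := hb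
  have hbA : b ∉ A := fun h => disjoint_left.mp hAB h hbB
  have haB : a ∉ B := disjoint_left.mp hAB ha
  have ha'B : a' ∉ B := disjoint_left.mp hAB ha'
  have hab : a ≠ b := fun h => hbA (h ▸ ha)
  have ha'b : a' ≠ b := fun h => hbA (h ▸ ha')
  have haE : a ∈ M.E := hA.subset_ground ha
  have ha'E : a' ∈ M.E := hA.subset_ground ha'
  have hbE : b ∈ M.E := hB.subset_ground hbB
  obtain ⟨hCbC, hbCb, hCbsub⟩ := hCb
  obtain ⟨hCa'C, ha'Ca', hCa'sub⟩ := hCa'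
  -- a ∈ Cb, since A - a + b is a base
  have haCb : a ∈ Cb := by
    by_contra h
    refine hCbC.1.not_indep (hA'.indep.subset ?_)
    intro x hx
    rcases mem_insert_iff.mp (hCbsub hx) with rfl | hxA
    · exact mem_insert _ _
    · exact mem_insert_of_mem _ ⟨hxA, fun hxa => h (mem_singleton_iff.mp hxa ▸ hx)⟩
  -- since a' ∉ Cb, Cb ⊆ insert b (A \ {a'}), so that set is dependent, hence not a base
  have hnotbase : ¬ M.IsBase (insert b (A \ {a'})) := by
    intro hbase
    refine hCbC.1.not_indep (hbase.indep.subset ?_)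
    intro x hx
    rcases mem_insert_iff.mp (hCbsub hx) with rfl | hxA
    · exact mem_insert _ _
    · exact mem_insert_of_mem _ ⟨hxA, fun h => h2 (mem_singleton_iff.mp h ▸ hx)⟩
  ext x
  constructor
  · rintro ⟨hxB', hx1, hx2⟩
    rcases mem_insert_iff.mp hxB' with rfl | ⟨hxB, hxb⟩
    · -- x = a : impossible, since insert a (A' \ {a'}) = insert b (A \ {a'}) is not a base
      exfalso
      apply hnotbase
      have heq : insert x ((insert b (A \ {x})) \ {a'}) = insert b (A \ {a'}) := by
        ext y
        simp only [mem_insert_iff, mem_diff, mem_singleton_iff]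
        constructor
        · rintro (rfl | h)
          · exact Or.inr ⟨ha, fun h => hne h.symm⟩
          · rcases h.1 with rfl | h'
            · exact Or.inl rfl
            · exact Or.inr ⟨h'.1, h.2⟩
        · rintro (rfl | ⟨hyA, hya'⟩)
          · exact Or.inr ⟨Or.inl rfl, ha'b.symm⟩
          · rcases eq_or_ne y x with rfl | hyx
            · exact Or.inl rfl
            · exact Or.inr ⟨Or.inr ⟨hyA, hyx⟩, hya'⟩
      rwa [heq] at hx1
    · -- x ∈ B \ {b}
      have hxa : x ≠ a := fun h => haB (h ▸ hxB)
      have hxA : x ∉ A := fun h => disjoint_left.mp hAB h hxB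
      have hxa' : x ≠ a' := fun h => ha'B (h ▸ hxB)
      refine ⟨hxB, ?_, ?_⟩
      · -- Base (insert x (A \ {a'})) from Base (insert x (A' \ {a'}))
        have hbase := key_s6 (M := M) hx1 hCbC haCb hbCb ?_ ?_ ?_ haE
        · have heq : insert a ((insert x ((insert b (A \ {a})) \ {a'})) \ {b}) =
              insert x (A \ {a'}) := by
            ext y
            simp only [mem_insert_iff, mem_diff, mem_singleton_iff]
            constructor
            · rintro (rfl | h)
              · exact Or.inr ⟨ha, fun h => hne h.symm⟩
              · obtain ⟨h', hyb⟩ := h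
                rcases h' with rfl | ⟨h'', hya'⟩
                · exact Or.inl rfl
                · rcases h'' with rfl | ⟨hyA, hya⟩
                  · exact absurd rfl hyb
                  · exact Or.inr ⟨hyA, hya'⟩
            · rintro (rfl | ⟨hyA, hya'⟩)
              · exact Or.inr ⟨Or.inl rfl, hxb⟩
              · rcases eq_or_ne y a with rfl | hya
                · exact Or.inl rfl
                · exact Or.inr ⟨Or.inr ⟨Or.inr ⟨hyA, hya⟩, hya'⟩,
                    fun h => hbA (h ▸ hyA)⟩
          rwa [heq] at hbase
        · -- Cb \ {a} ⊆ insert x (A' \ {a'})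
          rintro y ⟨hyCb, hya⟩
          rw [mem_singleton_iff] at hya
          rcases mem_insert_iff.mp (hCbsub hyCb) with rfl | hyA
          · exact mem_insert_of_mem _ ⟨mem_insert _ _, fun h => ha'b (mem_singleton_iff.mp h).symm⟩
          · exact mem_insert_of_mem _ ⟨mem_insert_of_mem _ ⟨hyA, hya⟩,
              fun h => h2 (mem_singleton_iff.mp h ▸ hyCb)⟩
        · -- b ∈ insert x (A' \ {a'})
          exact mem_insert_of_mem _ ⟨mem_insert _ _, fun h => ha'b (mem_singleton_iff.mp h).symm⟩
        · -- a ∉ insert x (A' \ {a'})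
          rintro (rfl | ⟨(rfl | h), _⟩)
          · exact hxa rfl
          · exact hab rfl
          · exact h.2 rfl
      · -- Base (insert a' (B \ {x})) from Base (insert a' (B' \ {x}))
        have hxCa' : x ∈ Ca' := by
          by_contra hxCa'
          refine hCa'C.1.not_indep (hx2.indep.subset ?_)
          intro y hy
          rcases mem_insert_iff.mp (hCa'sub hy) with rfl | hyB
          · exact mem_insert _ _
          · refine mem_insert_of_mem _ ⟨mem_insert_of_mem _ ⟨hyB, ?_⟩, ?_⟩
            · exact fun h => h1 (mem_singleton_iff.mp h ▸ hy)
            · exact fun h => hxCa' (mem_singleton_iff.mp h ▸ hy)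
        exact key_s6 (M := M) hB hCa'C ha'Ca' hxCa'
          (fun y hy => by
            rcases mem_insert_iff.mp (hCa'sub hy.1) with rfl | hyB
            · exact absurd (mem_singleton _) hy.2
            · exact hyB)
          hxB ha'B ha'E
  · rintro ⟨hxB, hx1, hx2⟩
    have hxA : x ∉ A := fun h => disjoint_left.mp hAB h hxB
    have hxa : x ≠ a := fun h => haB (h ▸ hxB)
    have hxa' : x ≠ a' := fun h => ha'B (h ▸ hxB)
    have hxb : x ≠ b := by
      rintro rfl
      exact hnotbase hx1
    refine ⟨mem_insert_of_mem _ ⟨hxB, hxb⟩, ?_, ?_⟩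
    · -- Base (insert x (A' \ {a'})) from Base (insert x (A \ {a'}))
      have hbase := key_s6 (M := M) hx1 hCbC hbCb haCb ?_ ?_ ?_ hbE
      · have heq : insert b ((insert x (A \ {a'})) \ {a}) =
            insert x ((insert b (A \ {a})) \ {a'}) := by
          ext y
          simp only [mem_insert_iff, mem_diff, mem_singleton_iff]
          constructor
          · rintro (rfl | ⟨(rfl | ⟨hyA, hya'⟩), hya⟩)
            · exact Or.inr ⟨Or.inl rfl, fun h => ha'b h.symm⟩
            · exact Or.inl rfl
            · exact Or.inr ⟨Or.inr ⟨hyA, hya⟩, hya'⟩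
          · rintro (rfl | ⟨(rfl | ⟨hyA, hya⟩), hya'⟩)
            · exact Or.inr ⟨Or.inl rfl, hxa⟩
            · exact Or.inl rfl
            · exact Or.inr ⟨Or.inr ⟨hyA, hya'⟩, hya⟩
        rwa [heq] at hbase
      · -- Cb \ {b} ⊆ insert x (A \ {a'})
        rintro y ⟨hyCb, hyb⟩
        rw [mem_singleton_iff] at hyb
        rcases mem_insert_iff.mp (hCbsub hyCb) with rfl | hyA
        · exact absurd rfl hyb
        · exact mem_insert_of_mem _ ⟨hyA, fun h => h2 (mem_singleton_iff.mp h ▸ hyCb)⟩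
      · -- a ∈ insert x (A \ {a'})
        exact mem_insert_of_mem _ ⟨ha, fun h => hne (mem_singleton_iff.mp h).symm⟩
      · -- b ∉ insert x (A \ {a'})
        rintro (rfl | ⟨hbA', _⟩)
        · exact hxb rfl
        · exact hbA hbA'
    · -- Base (insert a' (B' \ {x})) from Base (insert a' (B \ {x}))
      have hxCa' : x ∈ Ca' := by
        by_contra hxCa'
        refine hCa'C.1.not_indep (hx2.indep.subset ?_)
        intro y hy
        rcases mem_insert_iff.mp (hCa'sub hy) with rfl | hyB
        · exact mem_insert _ _
        · exact mem_insert_of_mem _ ⟨hyB, fun h => hxCa' (mem_singleton_iff.mp h ▸ hy)⟩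
      refine key_s6 (M := M) hB' hCa'C ha'Ca' hxCa' ?_ (mem_insert_of_mem _ ⟨hxB, hxb⟩) ?_ ha'E
      · rintro y ⟨hyCa', hya'⟩
        rw [mem_singleton_iff] at hya'
        rcases mem_insert_iff.mp (hCa'sub hyCa') with rfl | hyB
        · exact absurd rfl hya'
        · exact mem_insert_of_mem _ ⟨hyB, fun h => h1 (mem_singleton_iff.mp h ▸ hyCa')⟩
      · rintro (rfl | ⟨hB2, _⟩)
        · exact hne rfl
        · exact ha'B hB2
end

section
/- Let A and B be disjoint bases of a matroid M, let a ∈ A, and let b ∈ Sym(a,A,B); set A' := A - a + b and B' := B - b + a. Let a' ∈ A - a. If b ∈ C(a',B) and a' ∉ C(b,A), then Sym(a',A,B) △ Conn(a,a',A,B) ⊆ Sym(a',A',B') ⊆ Sym(a',A,B) ∪ Conn(a,a',A,B). -/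
open Set

variable {α : Type*}

/-- Exchange helper: replacing `e` by `f` in a base, given independence. -/
lemma exch_base (M : Matroid α) {X Y : Set α} {e f : α} (hB : M.IsBase X)
    (hXY : X \ {e} = Y) (hf : f ∉ X) (hI : M.Indep (insert f Y)) :
    M.IsBase (insert f Y) := by
  subst hXY; exact hB.exchange_isBase_of_indep hf hI

/-- `(insert u (insert v S)) \ {v} = insert u S` when `u ≠ v` and `v ∉ S`. -/
lemma pair_diff {S : Set α} {u v : α} (huv : u ≠ v) (hv : v ∉ S) :
    (insert u (insert v S)) \ {v} = insert u S := by
  rw [← insert_diff_singleton_comm huv, insert_diff_self_of_notMem hv]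

set_option maxHeartbeats 1000000 in
theorem stmt_7 (M : Matroid α) [M.Finite] {A B Ca' Cb : Set α} {a a' b : α}
    (hA : M.IsBase A) (hB : M.IsBase B) (hAB : Disjoint A B)
    (ha : a ∈ A) (hb : b ∈ SymEx M a A B)
    (ha' : a' ∈ A) (hne : a' ≠ a)
    (hCa' : IsFundCct M Ca' a' B) (hCb : IsFundCct M Cb b A)
    (h1 : b ∈ Ca') (h2 : a' ∉ Cb) :
    symmDiff (SymEx M a' A B) (ConnEx M a a' A B)
        ⊆ SymEx M a' (insert b (A \ {a})) (insert a (B \ {b})) ∧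
      SymEx M a' (insert b (A \ {a})) (insert a (B \ {b}))
        ⊆ SymEx M a' A B ∪ ConnEx M a a' A B := by
  obtain ⟨hbB, hA'base, hB'base⟩ := hb
  -- basic disjointness facts
  have hbA : b ∉ A := disjoint_right.mp hAB hbB
  have haB : a ∉ B := disjoint_left.mp hAB ha
  have ha'B : a' ∉ B := disjoint_left.mp hAB ha'
  have hba' : b ≠ a' := fun h => hbA (h ▸ ha')
  have hba : b ≠ a := fun h => hbA (h ▸ ha)
  have hAE : A ⊆ M.E := hA.subset_ground
  have hBE : B ⊆ M.E := hB.subset_ground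
  have hbE : b ∈ M.E := hBE hbB
  have haE : a ∈ M.E := hAE ha
  have ha'E : a' ∈ M.E := hAE ha'
  -- the set insert b (A \ {a'}) is dependent
  have hCbsub : Cb ⊆ insert b (A \ {a'}) := by
    intro x hx
    rcases hCb.2.2 hx with h | h
    · exact Or.inl h
    · exact Or.inr ⟨h, fun he => h2 (he ▸ hx)⟩
  have hdep : M.Dep (insert b (A \ {a'})) :=
    hCb.1.1.superset hCbsub (insert_subset hbE (diff_subset.trans hAE))
  -- B'' := insert a' (B \ {b}) is a base
  have hBb_indep : M.Indep (B \ {b}) := hB.indep.subset diff_subset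
  have hbncl : b ∉ M.closure (B \ {b}) := hB.indep.notMem_closure_diff_of_mem hbB
  have hCa'indep : M.Indep (Ca' \ {b}) :=
    hCa'.1.2 _ (sdiff_singleton_ssubset.mpr h1)
  have hbclC : b ∈ M.closure (Ca' \ {b}) := by
    have hd : M.Dep (insert b (Ca' \ {b})) := by
      rw [insert_diff_singleton, insert_eq_of_mem h1]
      exact hCa'.1.1
    exact (hCa'indep.insert_dep_iff.mp hd).1
  have hCsub : Ca' \ {b} ⊆ insert a' (B \ {b}) := by
    rintro x ⟨hx, hxb⟩
    rcases hCa'.2.2 hx with h | h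
    · exact Or.inl h
    · exact Or.inr ⟨h, hxb⟩
  have ha'nclBb : a' ∉ M.closure (B \ {b}) := by
    intro h
    apply hbncl
    have hsub : M.closure (Ca' \ {b}) ⊆ M.closure (insert a' (B \ {b})) :=
      M.closure_subset_closure hCsub
    rw [Matroid.closure_insert_eq_of_mem_closure h] at hsub
    exact hsub hbclC
  have hB''base : M.IsBase (insert a' (B \ {b})) :=
    hB.exchange_isBase_of_indep ha'B
      ((hBb_indep.insert_indep_iff_of_notMem (fun h => ha'B h.1)).mpr ⟨ha'E, ha'nclBb⟩)
  -- the A-side set D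
  set D : Set α := (A \ {a}) \ {a'} with hD
  have hDA : D ⊆ A := diff_subset.trans diff_subset
  have haD : a ∉ D := fun h => h.1.2 rfl
  have ha'D : a' ∉ D := fun h => h.2 rfl
  have hbD : b ∉ D := fun h => hbA (hDA h)
  have idA : A \ {a'} = insert a D := by
    ext x
    simp only [hD, mem_insert_iff, mem_diff, mem_singleton_iff]
    constructor
    · rintro ⟨hxA, hx⟩
      by_cases h : x = a
      · exact Or.inl h
      · exact Or.inr ⟨⟨hxA, h⟩, hx⟩
    · rintro (rfl | ⟨⟨h1', h2'⟩, h3⟩)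
      · exact ⟨ha, Ne.symm hne⟩
      · exact ⟨h1', h3⟩
  have idA' : (insert b (A \ {a})) \ {a'} = insert b D :=
    (insert_diff_singleton_comm hba' _).symm
  have hiaD : M.Indep (insert a D) := idA ▸ hA.indep.subset diff_subset
  have hibD : M.Indep (insert b D) :=
    hA'base.indep.subset (insert_subset_insert diff_subset)
  have hDindep : M.Indep D := hiaD.subset (subset_insert _ _)
  have hbclaD : b ∈ M.closure (insert a D) := by
    rw [← idA]
    exact ((hA.indep.subset diff_subset : M.Indep (A \ {a'})).insert_dep_iff.mp hdep).1
  have hbnclD : b ∉ M.closure D := (hDindep.notMem_closure_iff_of_notMem hbD).mpr hibD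
  have hclD : M.closure (insert b D) = M.closure (insert a D) :=
    Matroid.closure_insert_congr ⟨hbclaD, hbnclD⟩
  -- Claim I : for y ∈ B, y ≠ b, the A-side conditions agree
  have claimI : ∀ y ∈ B, y ≠ b →
      (M.IsBase (insert y (A \ {a'})) ↔ M.IsBase (insert y (insert b D))) := by
    intro y hyB hyb
    have hyA : y ∉ A := disjoint_right.mp hAB hyB
    have hyE : y ∈ M.E := hBE hyB
    have hya : y ≠ a := fun h => hyA (h ▸ ha)
    have hyD : y ∉ D := fun h => hyA (hDA h)
    have hynaD : y ∉ insert a D := by simp [hya, hyD]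
    have hynbD : y ∉ insert b D := by simp [hyb, hyD]
    rw [idA]
    constructor
    · intro hX
      have hyncl : y ∉ M.closure (insert a D) :=
        (hiaD.notMem_closure_iff_of_notMem hynaD).mpr
          hX.indep
      have hI : M.Indep (insert y (insert b D)) :=
        (hibD.notMem_closure_iff_of_notMem hynbD).mp (hclD ▸ hyncl)
      have hbX : b ∉ insert y (insert a D) := by
        simp only [mem_insert_iff, not_or]
        exact ⟨Ne.symm hyb, hba, hbD⟩
      have hres := exch_base M hX (pair_diff hya haD) hbX (by rwa [insert_comm])
      rwa [insert_comm]
    · intro hX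
      have hyncl : y ∉ M.closure (insert b D) :=
        (hibD.notMem_closure_iff_of_notMem hynbD).mpr
          hX.indep
      have hI : M.Indep (insert y (insert a D)) :=
        (hiaD.notMem_closure_iff_of_notMem hynaD).mp (hclD.symm ▸ hyncl)
      have haX : a ∉ insert y (insert b D) := by
        simp only [mem_insert_iff, not_or]
        exact ⟨hya.symm, Ne.symm hba, haD⟩
      have hres := exch_base M hX (pair_diff hyb hbD) haX (by rwa [insert_comm])
      rwa [insert_comm]
  -- Claim II (key) : B-side conditions
  have key : ∀ y ∈ B, y ≠ b →
      ((M.IsBase (insert a' ((insert a (B \ {b})) \ {y})) →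
          M.IsBase (insert a' (B \ {y})) ∨ M.IsBase (insert a (B \ {y}))) ∧
       (M.IsBase (insert a' (B \ {y})) → ¬ M.IsBase (insert a (B \ {y})) →
          M.IsBase (insert a' ((insert a (B \ {b})) \ {y}))) ∧
       (M.IsBase (insert a (B \ {y})) → ¬ M.IsBase (insert a' (B \ {y})) →
          M.IsBase (insert a' ((insert a (B \ {b})) \ {y})))) := by
    intro y hyB hyb
    have hyA : y ∉ A := disjoint_right.mp hAB hyB
    have hya : y ≠ a := fun h => hyA (h ▸ ha)
    have hya' : y ≠ a' := fun h => hyA (h ▸ ha')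
    set E0 : Set α := (B \ {b}) \ {y} with hE0
    have hE0B : E0 ⊆ B := diff_subset.trans diff_subset
    have hE0E : E0 ⊆ M.E := hE0B.trans hBE
    have haE0 : a ∉ E0 := fun h => haB (hE0B h)
    have ha'E0 : a' ∉ E0 := fun h => ha'B (hE0B h)
    have hbE0 : b ∉ E0 := fun h => h.1.2 rfl
    have hyE0 : y ∉ E0 := fun h => h.2 rfl
    -- set identities
    have idBy : B \ {y} = insert b E0 := by
      ext x
      simp only [hE0, mem_insert_iff, mem_diff, mem_singleton_iff]
      constructor
      · rintro ⟨hxB, hx⟩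
        by_cases h : x = b
        · exact Or.inl h
        · exact Or.inr ⟨⟨hxB, h⟩, hx⟩
      · rintro (rfl | ⟨⟨h1', h2'⟩, h3⟩)
        · exact ⟨hbB, hyb.symm⟩
        · exact ⟨h1', h3⟩
    have idB'y : (insert a (B \ {b})) \ {y} = insert a E0 :=
      (insert_diff_singleton_comm hya.symm _).symm
    have idB''y : (insert a' (B \ {b})) \ {y} = insert a' E0 :=
      (insert_diff_singleton_comm hya'.symm _).symm
    -- independence facts
    have hibE0 : M.Indep (insert b E0) := hB.indep.subset (insert_subset hbB hE0B)
    have hiaE0 : M.Indep (insert a E0) :=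
      hB'base.indep.subset (insert_subset_insert diff_subset)
    have hia'E0 : M.Indep (insert a' E0) :=
      hB''base.indep.subset (insert_subset_insert diff_subset)
    have hE0indep : M.Indep E0 := hibE0.subset (subset_insert _ _)
    have hanclE0 : a ∉ M.closure E0 :=
      (hE0indep.notMem_closure_iff_of_notMem haE0).mpr hiaE0
    have ha'nclE0 : a' ∉ M.closure E0 :=
      (hE0indep.notMem_closure_iff_of_notMem ha'E0).mpr hia'E0
    have ha'nbE0 : a' ∉ insert b E0 := by
      simp only [mem_insert_iff, not_or]; exact ⟨Ne.symm hba', ha'E0⟩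
    have hanbE0 : a ∉ insert b E0 := by
      simp only [mem_insert_iff, not_or]; exact ⟨Ne.symm hba, haE0⟩
    have ha'naE0 : a' ∉ insert a E0 := by
      simp only [mem_insert_iff, not_or]; exact ⟨hne, ha'E0⟩
    -- characterizations
    have h2iff : M.IsBase (insert a' (B \ {y})) ↔ a' ∉ M.closure (insert b E0) := by
      rw [idBy]
      constructor
      · intro h
        exact (hibE0.notMem_closure_iff_of_notMem ha'nbE0).mpr h.indep
      · intro h
        have hI := (hibE0.notMem_closure_iff_of_notMem ha'nbE0).mp h
        have hbX : b ∉ insert a' (B \ {b}) := by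
          simp only [mem_insert_iff, not_or]
          exact ⟨hba', fun hh => hh.2 rfl⟩
        have hres := exch_base M hB''base idB''y hbX (by rwa [insert_comm])
        rwa [insert_comm]
    have h3iff : M.IsBase (insert a (B \ {y})) ↔ a ∉ M.closure (insert b E0) := by
      rw [idBy]
      constructor
      · intro h
        exact (hibE0.notMem_closure_iff_of_notMem hanbE0).mpr h.indep
      · intro h
        have hI := (hibE0.notMem_closure_iff_of_notMem hanbE0).mp h
        have hbX : b ∉ insert a (B \ {b}) := by
          simp only [mem_insert_iff, not_or]
          exact ⟨hba, fun hh => hh.2 rfl⟩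
        have hres := exch_base M hB'base idB'y hbX (by rwa [insert_comm])
        rwa [insert_comm]
    have h'iff : M.IsBase (insert a' ((insert a (B \ {b})) \ {y})) ↔
        a' ∉ M.closure (insert a E0) := by
      rw [idB'y]
      constructor
      · intro h
        exact (hiaE0.notMem_closure_iff_of_notMem ha'naE0).mpr h.indep
      · intro h
        have hI := (hiaE0.notMem_closure_iff_of_notMem ha'naE0).mp h
        have haX : a ∉ insert a' (B \ {b}) := by
          simp only [mem_insert_iff, not_or]
          exact ⟨Ne.symm hne, fun hh => haB hh.1⟩
        have hres := exch_base M hB''base idB''y haX (by rwa [insert_comm])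
        rwa [insert_comm]
    refine ⟨?_, ?_, ?_⟩
    · -- P2
      intro h'
      have h'cl := h'iff.mp h'
      by_contra hcon
      push_neg at hcon
      have ha'in : a' ∈ M.closure (insert b E0) := by
        by_contra hh; exact hcon.1 (h2iff.mpr hh)
      have hain : a ∈ M.closure (insert b E0) := by
        by_contra hh; exact hcon.2 (h3iff.mpr hh)
      have hcleq : M.closure (insert a E0) = M.closure (insert b E0) :=
        Matroid.closure_insert_congr ⟨hain, hanclE0⟩
      exact h'cl (hcleq ▸ ha'in)
    · -- P1a
      intro hii hniii
      have ha'nb : a' ∉ M.closure (insert b E0) := h2iff.mp hii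
      have hain : a ∈ M.closure (insert b E0) := by
        by_contra hh; exact hniii (h3iff.mpr hh)
      have hcleq : M.closure (insert a E0) = M.closure (insert b E0) :=
        Matroid.closure_insert_congr ⟨hain, hanclE0⟩
      exact h'iff.mpr (fun h => ha'nb (hcleq ▸ h))
    · -- P1b
      intro hiii hnii
      have hanb : a ∉ M.closure (insert b E0) := h3iff.mp hiii
      have ha'in : a' ∈ M.closure (insert b E0) := by
        by_contra hh; exact hnii (h2iff.mpr hh)
      have hcleq' : M.closure (insert a' E0) = M.closure (insert b E0) :=
        Matroid.closure_insert_congr ⟨ha'in, ha'nclE0⟩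
      refine h'iff.mpr (fun hcon => ?_)
      have hcleq'' : M.closure (insert a' E0) = M.closure (insert a E0) :=
        Matroid.closure_insert_congr ⟨hcon, ha'nclE0⟩
      have hain : a ∈ M.closure (insert a E0) :=
        M.mem_closure_of_mem (mem_insert a E0) (insert_subset haE hE0E)
      exact hanb (hcleq' ▸ hcleq''.symm ▸ hain)
  -- assemble
  constructor
  · intro y hy
    rw [Set.mem_symmDiff] at hy
    obtain ⟨⟨hyB, hi, hii⟩, hniii⟩ | ⟨⟨hyB, hi, hiii⟩, hnii⟩ :
        ((y ∈ B ∧ M.IsBase (insert y (A \ {a'})) ∧ M.IsBase (insert a' (B \ {y}))) ∧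
          ¬ M.IsBase (insert a (B \ {y}))) ∨
        ((y ∈ B ∧ M.IsBase (insert y (A \ {a'})) ∧ M.IsBase (insert a (B \ {y}))) ∧
          ¬ M.IsBase (insert a' (B \ {y}))) := by
      rcases hy with ⟨⟨hyB, hi, hii⟩, hnc⟩ | ⟨⟨hyB, hi, hiii⟩, hns⟩
      · exact Or.inl ⟨⟨hyB, hi, hii⟩, fun h => hnc ⟨hyB, hi, h⟩⟩
      · exact Or.inr ⟨⟨hyB, hi, hiii⟩, fun h => hns ⟨hyB, hi, h⟩⟩
    · have hyb : y ≠ b := by rintro rfl; exact hdep.not_indep hi.indep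
      refine ⟨Or.inr ⟨hyB, hyb⟩, ?_, ?_⟩
      · rw [idA']; exact (claimI y hyB hyb).mp hi
      · exact (key y hyB hyb).2.1 hii hniii
    · have hyb : y ≠ b := by rintro rfl; exact hdep.not_indep hi.indep
      refine ⟨Or.inr ⟨hyB, hyb⟩, ?_, ?_⟩
      · rw [idA']; exact (claimI y hyB hyb).mp hi
      · exact (key y hyB hyb).2.2 hiii hnii
  · rintro y ⟨hyB', hi', hii'⟩
    rcases hyB' with rfl | ⟨hyB, hyb⟩
    · exfalso
      rw [idA'] at hi'
      have heq : insert y (insert b D) = insert b (A \ {a'}) := by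
        rw [idA, insert_comm]
      exact hdep.not_indep (heq ▸ hi'.indep)
    · have hyb' : y ≠ b := hyb
      have hi : M.IsBase (insert y (A \ {a'})) :=
        (claimI y hyB hyb').mpr (by rwa [idA'] at hi')
      rcases (key y hyB hyb').1 hii' with h | h
      · exact Or.inl ⟨hyB, hi, h⟩
      · exact Or.inr ⟨hyB, hi, h⟩
end

section
/- Let A and B be disjoint bases of a matroid M, let a ∈ A, and let b ∈ Sym(a,A,B); set A' := A - a + b and B' := B - b + a. Let a' ∈ A - a. If b ∉ C(a',B) and a' ∈ C(b,A), then Sym(a',A,B) △ Conn(a',a,A,B) ⊆ Sym(a',A',B') ⊆ Sym(a',A,B) ∪ Conn(a',a,A,B). -/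
open Set

variable {α : Type*}

section Aux

variable {M : Matroid α} {A B C C₁ C₂ D I X : Set α} {a a' b e f x y : α}

lemma aux_circ_mem_closure (hC : IsCircuit M C) (hx : x ∈ C) : x ∈ M.closure (C \ {x}) := by
  have hI : M.Indep (C \ {x}) :=
    hC.2 _ ⟨diff_subset, fun h => (h hx).2 rfl⟩
  have hdep : M.Dep (insert x (C \ {x})) := by
    rw [insert_diff_singleton, insert_eq_of_mem hx]; exact hC.1
  exact (hI.insert_dep_iff.mp hdep).1

lemma aux_not_mem_closure_of_insert_indep (hI : M.Indep (insert f X)) (hf : f ∉ X) :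
    f ∉ M.closure X :=
  fun h => ((hI.subset (subset_insert _ _)).insert_dep_iff.mpr ⟨h, hf⟩).not_indep hI

lemma aux_unique_circuit (hI : M.Indep I) (hC₁ : IsCircuit M C₁) (hC₂ : IsCircuit M C₂)
    (h₁ : C₁ ⊆ insert e I) (h₂ : C₂ ⊆ insert e I) : C₁ = C₂ := by
  by_contra hne
  have he₁ : e ∈ C₁ := by
    by_contra h
    exact hC₁.1.not_indep (hI.subset (fun z hz => (h₁ hz).resolve_left (fun h' => h (h' ▸ hz))))
  have hx : ∃ x, x ∈ C₂ ∧ x ∉ C₁ := by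
    by_contra h
    push_neg at h
    have hss : C₂ ⊂ C₁ := ⟨h, fun h' => hne (h'.antisymm h)⟩
    exact hC₂.1.not_indep (hC₁.2 _ hss)
  obtain ⟨x, hxC₂, hxC₁⟩ := hx
  have hxI : x ∈ I := (h₂ hxC₂).resolve_left (fun h => hxC₁ (h ▸ he₁))
  have hecl : e ∈ M.closure (I \ {x}) := by
    have hsub : C₁ \ {e} ⊆ I \ {x} := fun z hz =>
      ⟨(h₁ hz.1).resolve_left hz.2, fun h' => hxC₁ (mem_singleton_iff.mp h' ▸ hz.1)⟩
    exact M.closure_mono hsub (aux_circ_mem_closure hC₁ he₁)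
  have hxcl : x ∈ M.closure (insert e (I \ {x})) := by
    have hsub : C₂ \ {x} ⊆ insert e (I \ {x}) := by
      rintro z ⟨hz, hzx⟩
      rcases h₂ hz with h | h
      · exact Or.inl h
      · exact Or.inr ⟨h, hzx⟩
    exact M.closure_mono hsub (aux_circ_mem_closure hC₂ hxC₂)
  rw [Matroid.closure_insert_eq_of_mem_closure hecl] at hxcl
  exact hI.notMem_closure_diff_of_mem hxI hxcl

lemma aux_dep_has_circuit (M : Matroid α) [M.Finite] :
    ∀ n D, D.ncard = n → M.Dep D → ∃ C, C ⊆ D ∧ IsCircuit M C := by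
  intro n
  induction n using Nat.strong_induction_on with
  | _ n ih =>
    rintro D rfl hD
    by_cases h : ∀ D', D' ⊂ D → M.Indep D'
    · exact ⟨D, Subset.rfl, hD, h⟩
    push_neg at h
    obtain ⟨D', hss, hni⟩ := h
    have hDfin : D.Finite := M.ground_finite.subset hD.subset_ground
    have hD' : M.Dep D' := ⟨hni, hss.subset.trans hD.subset_ground⟩
    obtain ⟨C, hCD, hC⟩ := ih _ (Set.ncard_lt_ncard hss hDfin) D' rfl hD'
    exact ⟨C, hCD.trans hss.subset, hC⟩

/-- For an independent set `X`, an element `e ∉ X` with fundamental circuit `C`,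
and `y ∈ X` : `e ∈ cl (X \ {y})` iff `y ∉ C`. -/
lemma aux_fund_closure_iff [M.Finite] (hX : M.Indep X) (heX : e ∉ X)
    (hF : IsFundCct M C e X) (hy : y ∈ X) : e ∈ M.closure (X \ {y}) ↔ y ∉ C := by
  constructor
  · intro hcl hyC
    have hIndep : M.Indep (X \ {y}) := hX.subset diff_subset
    have hdep : M.Dep (insert e (X \ {y})) :=
      hIndep.insert_dep_iff.mpr ⟨hcl, fun h => heX h.1⟩
    obtain ⟨C₀, hC₀sub, hC₀⟩ := aux_dep_has_circuit M _ _ rfl hdep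
    have hC₀X : C₀ ⊆ insert e X := hC₀sub.trans (insert_subset_insert diff_subset)
    have hCeq : C₀ = C := aux_unique_circuit hX hC₀ hF.1 hC₀X hF.2.2
    have hyC₀ : y ∈ C₀ := hCeq ▸ hyC
    rcases hC₀sub hyC₀ with h | h
    · exact heX (h ▸ hy)
    · exact h.2 rfl
  · intro hyC
    have hsub : C \ {e} ⊆ X \ {y} := by
      rintro z ⟨hz, hze⟩
      exact ⟨(hF.2.2 hz).resolve_left hze, fun h => hyC (mem_singleton_iff.mp h ▸ hz)⟩
    exact M.closure_mono hsub (aux_circ_mem_closure hF.1 hF.2.1)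

lemma aux_base_exchange_iff (hX : M.IsBase X) (he : e ∈ X) (hfE : f ∈ M.E) (hf : f ∉ X) :
    M.IsBase (insert f (X \ {e})) ↔ f ∉ M.closure (X \ {e}) := by
  have hI : M.Indep (X \ {e}) := hX.indep.subset diff_subset
  constructor
  · intro hbase hcl
    exact (hI.insert_dep_iff.mpr ⟨hcl, fun h => hf h.1⟩).not_indep hbase.indep
  · intro hcl
    exact hX.exchange_isBase_of_indep hf
      ((hI.insert_indep_iff_of_notMem (fun h => hf h.1)).mpr ⟨hfE, hcl⟩)

lemma aux_kl1 [M.Finite] (hA : M.IsBase A) (ha : a ∈ A) (ha' : a' ∈ A) (hne : a' ≠ a)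
    (hyE : y ∈ M.E) (hyA : y ∉ A)
    (hc1 : y ∈ M.closure (A \ {a})) (hc2 : y ∈ M.closure (A \ {a'})) :
    y ∈ M.closure (insert b ((A \ {a}) \ {a'})) := by
  set G := (A \ {a}) \ {a'} with hG
  have hGA : insert a' G = A \ {a} := by
    rw [hG, insert_diff_singleton, insert_eq_of_mem (show a' ∈ A \ {a} from ⟨ha', fun h => hne (mem_singleton_iff.mp h)⟩)]
  have hGA' : insert a G = A \ {a'} := by
    rw [hG, diff_diff_comm, insert_diff_singleton,
      insert_eq_of_mem (show a ∈ A \ {a'} from ⟨ha, fun h => hne (mem_singleton_iff.mp h).symm⟩)]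
  by_cases hyG : y ∈ M.closure G
  · exact M.closure_mono (subset_insert _ _) hyG
  exfalso
  have hacl : a ∈ M.closure (insert y G) := (Matroid.closure_exchange ⟨by rwa [hGA'], hyG⟩).1
  have ha'cl : a' ∈ M.closure (insert y G) := (Matroid.closure_exchange ⟨by rwa [hGA], hyG⟩).1
  have hGi : M.Indep G := hA.indep.subset (diff_subset.trans diff_subset)
  have hyG' : y ∉ G := fun h => hyA h.1.1
  have hSE : insert y G ⊆ M.E := insert_subset hyE hGi.subset_ground
  have hSi : M.Indep (insert y G) := (hGi.insert_indep_iff_of_notMem hyG').mpr ⟨hyE, hyG⟩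
  have hAeq : insert a (insert a' G) = A := by
    rw [hGA, insert_diff_singleton, insert_eq_of_mem ha]
  have hAsub : A ⊆ M.closure (insert y G) := by
    rw [← hAeq]
    exact insert_subset hacl (insert_subset ha'cl
      ((subset_insert _ _).trans (M.subset_closure _ hSE)))
  have hspan : M.Spanning (insert y G) := by
    rw [Matroid.spanning_iff_ground_subset_closure hSE, ← hA.closure_eq]
    exact M.closure_subset_closure_of_subset_closure hAsub
  have hSbase := hSi.isBase_of_spanning hspan
  have hGfin : G.Finite := M.ground_finite.subset hGi.subset_ground
  have hcard := hSbase.ncard_eq_ncard_of_isBase hA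
  have ha'G : a' ∉ G := fun h => h.2 rfl
  have haG : a ∉ insert a' G := by rw [hGA]; exact fun h => h.2 rfl
  have hAcard : A.ncard = G.ncard + 2 := by
    rw [← hAeq, Set.ncard_insert_of_notMem haG (hGfin.insert _),
      Set.ncard_insert_of_notMem ha'G hGfin]
  have hScard : (insert y G).ncard = G.ncard + 1 := Set.ncard_insert_of_notMem hyG' hGfin
  rw [hScard, hAcard] at hcard
  omega

lemma aux_kl2 (hA : M.IsBase A) (ha : a ∈ A) (ha' : a' ∈ A) (hne : a' ≠ a)
    (hb1 : b ∉ M.closure (A \ {a})) (hb2 : b ∉ M.closure (A \ {a'}))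
    (hy : y ∈ M.closure (insert b ((A \ {a}) \ {a'}))) :
    (y ∈ M.closure (A \ {a'}) ↔ y ∈ M.closure (A \ {a})) := by
  set G := (A \ {a}) \ {a'} with hG
  have hG1 : G ⊆ A \ {a'} := by rw [hG, diff_diff_comm]; exact diff_subset
  have hG2 : G ⊆ A \ {a} := diff_subset
  by_cases hyG : y ∈ M.closure G
  · exact iff_of_true (M.closure_mono hG1 hyG) (M.closure_mono hG2 hyG)
  · have hbcl : b ∈ M.closure (insert y G) := (Matroid.closure_exchange ⟨hy, hyG⟩).1
    have key : ∀ X : Set α, X ⊆ M.E → G ⊆ X → b ∉ M.closure X → y ∉ M.closure X := by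
      intro X hXE hGX hbX hyX
      exact hbX (M.closure_subset_closure_of_subset_closure
        (insert_subset hyX (hGX.trans (M.subset_closure X hXE))) hbcl)
    exact iff_of_false
      (key _ (diff_subset.trans hA.subset_ground) hG1 hb2)
      (key _ (diff_subset.trans hA.subset_ground) hG2 hb1)

end Aux

theorem stmt_8 (M : Matroid α) [M.Finite] {A B Ca' Cb : Set α} {a a' b : α}
    (hA : M.IsBase A) (hB : M.IsBase B) (hAB : Disjoint A B)
    (ha : a ∈ A) (hb : b ∈ SymEx M a A B)
    (ha' : a' ∈ A) (hne : a' ≠ a)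
    (hCa' : IsFundCct M Ca' a' B) (hCb : IsFundCct M Cb b A)
    (h1 : b ∉ Ca') (h2 : a' ∈ Cb) :
    symmDiff (SymEx M a' A B) (ConnEx M a' a A B)
        ⊆ SymEx M a' (insert b (A \ {a})) (insert a (B \ {b})) ∧
      SymEx M a' (insert b (A \ {a})) (insert a (B \ {b}))
        ⊆ SymEx M a' A B ∪ ConnEx M a' a A B := by
  obtain ⟨hbB, hA'b, hB'b⟩ := hb
  have hAE := hA.subset_ground
  have hBE := hB.subset_ground
  have hbA : b ∉ A := fun h => disjoint_left.mp hAB h hbB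
  have haB : a ∉ B := disjoint_left.mp hAB ha
  have ha'B : a' ∉ B := disjoint_left.mp hAB ha'
  have ha'E : a' ∈ M.E := hAE ha'
  have hbE : b ∈ M.E := hBE hbB
  have hbna' : b ≠ a' := fun h => hbA (h ▸ ha')
  have hbclAa : b ∉ M.closure (A \ {a}) :=
    aux_not_mem_closure_of_insert_indep hA'b.indep (fun h => hbA h.1)
  have hbclAa' : b ∉ M.closure (A \ {a'}) :=
    fun h => (aux_fund_closure_iff hA.indep hbA hCb ha').mp h h2
  have ha'clBb : a' ∈ M.closure (B \ {b}) :=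
    (aux_fund_closure_iff hB.indep ha'B hCa' hbB).mpr h1
  have ha'B' : a' ∉ insert a (B \ {b}) := by
    rintro (h | h)
    · exact hne h
    · exact ha'B h.1
  have hFB' : IsFundCct M Ca' a' (insert a (B \ {b})) := by
    refine ⟨hCa'.1, hCa'.2.1, fun z hz => ?_⟩
    rcases hCa'.2.2 hz with h | h
    · exact Or.inl h
    · exact Or.inr (Or.inr ⟨h, fun he => h1 (mem_singleton_iff.mp he ▸ hz)⟩)
  have hRchar : ∀ y ∈ B, (M.IsBase (insert a' (B \ {y})) ↔ y ∈ Ca') := by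
    intro y hy
    rw [aux_base_exchange_iff hB hy ha'E ha'B,
      aux_fund_closure_iff hB.indep ha'B hCa' hy, not_not]
  have hR'char : ∀ y ∈ (insert a (B \ {b}) : Set α),
      (M.IsBase (insert a' ((insert a (B \ {b})) \ {y})) ↔ y ∈ Ca') := by
    intro y hy
    rw [aux_base_exchange_iff hB'b hy ha'E ha'B',
      aux_fund_closure_iff hB'b.indep ha'B' hFB' hy, not_not]
  have ha'A' : a' ∈ insert b (A \ {a}) := Or.inr ⟨ha', fun h => hne (mem_singleton_iff.mp h)⟩
  constructor
  · intro y hy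
    rw [Set.mem_symmDiff] at hy
    have hcore : y ∈ B → M.IsBase (insert a' (B \ {y})) →
        ¬(y ∈ M.closure (A \ {a'}) ↔ y ∈ M.closure (A \ {a})) →
        y ∈ SymEx M a' (insert b (A \ {a})) (insert a (B \ {b})) := by
      intro hyB hR hPQ
      have hyA : y ∉ A := disjoint_right.mp hAB hyB
      have hyE : y ∈ M.E := hBE hyB
      have hyCa' : y ∈ Ca' := (hRchar y hyB).mp hR
      have hynb : y ≠ b := fun h => h1 (h ▸ hyCa')
      have hyB' : y ∈ insert a (B \ {b}) := Or.inr ⟨hyB, fun h => hynb (mem_singleton_iff.mp h)⟩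
      have hyA' : y ∉ insert b (A \ {a}) := by
        rintro (h | h)
        · exact hynb h
        · exact hyA h.1
      refine ⟨hyB', ?_, (hR'char y hyB').mpr hyCa'⟩
      rw [aux_base_exchange_iff hA'b ha'A' hyE hyA',
        ← insert_diff_singleton_comm hbna' (A \ {a})]
      exact fun hycl => hPQ (aux_kl2 hA ha ha' hne hbclAa hbclAa' hycl)
    rcases hy with ⟨⟨hyB, hP, hR⟩, hnC⟩ | ⟨⟨hyB, hQ, hR⟩, hnS⟩
    · have hyA : y ∉ A := disjoint_right.mp hAB hyB
      have hyE : y ∈ M.E := hBE hyB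
      have hPc : y ∉ M.closure (A \ {a'}) := (aux_base_exchange_iff hA ha' hyE hyA).mp hP
      have hQc : y ∈ M.closure (A \ {a}) := by
        by_contra h
        exact hnC ⟨hyB, (aux_base_exchange_iff hA ha hyE hyA).mpr h, hR⟩
      exact hcore hyB hR (fun hiff => hPc (hiff.mpr hQc))
    · have hyA : y ∉ A := disjoint_right.mp hAB hyB
      have hyE : y ∈ M.E := hBE hyB
      have hQc : y ∉ M.closure (A \ {a}) := (aux_base_exchange_iff hA ha hyE hyA).mp hQ
      have hPc : y ∈ M.closure (A \ {a'}) := by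
        by_contra h
        exact hnS ⟨hyB, (aux_base_exchange_iff hA ha' hyE hyA).mpr h, hR⟩
      exact hcore hyB hR (fun hiff => hQc (hiff.mp hPc))
  · rintro y ⟨hyB', b1, b2⟩
    have hyna : y ≠ a := by
      rintro rfl
      have hrw : (insert y (B \ {b})) \ {y} = B \ {b} :=
        insert_diff_self_of_notMem (fun h => haB h.1)
      rw [hrw] at b2
      exact aux_not_mem_closure_of_insert_indep b2.indep (fun h => ha'B h.1) ha'clBb
    have hyBb : y ∈ B \ {b} := (mem_insert_iff.mp hyB').resolve_left hyna
    have hyB : y ∈ B := hyBb.1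
    have hynb : y ≠ b := fun h => hyBb.2 (mem_singleton_iff.mpr h)
    have hyA : y ∉ A := disjoint_right.mp hAB hyB
    have hyE : y ∈ M.E := hBE hyB
    have hyA' : y ∉ insert b (A \ {a}) := by
      rintro (h | h)
      · exact hynb h
      · exact hyA h.1
    have hyCa' : y ∈ Ca' := (hR'char y hyB').mp b2
    have hR : M.IsBase (insert a' (B \ {y})) := (hRchar y hyB).mpr hyCa'
    have hycl : y ∉ M.closure (insert b ((A \ {a}) \ {a'})) := by
      have h := (aux_base_exchange_iff hA'b ha'A' hyE hyA').mp b1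
      rwa [← insert_diff_singleton_comm hbna' (A \ {a})] at h
    by_cases hP : y ∈ M.closure (A \ {a'})
    · have hQ : y ∉ M.closure (A \ {a}) :=
        fun hQ => hycl (aux_kl1 hA ha ha' hne hyE hyA hQ hP)
      exact Or.inr ⟨hyB, (aux_base_exchange_iff hA ha hyE hyA).mpr hQ, hR⟩
    · exact Or.inl ⟨hyB, (aux_base_exchange_iff hA ha' hyE hyA).mpr hP, hR⟩
end

section
/- Let A and B be disjoint bases of a matroid M, let a ∈ A, and let b ∈ Sym(a,A,B); set A' := A - a + b and B' := B - b + a. Let a' ∈ A - a. If b ∈ C(a',B) and a' ∈ C(b,A), then (Sym(a',A,B) △ Sym(a,A,B) △ Conn(a',a,A,B) △ Conn(a,a',A,B)) + a ⊆ Sym(a',A',B') ⊆ (Sym(a',A,B) ∪ Sym(a,A,B) ∪ Conn(a',a,A,B) ∪ Conn(a,a',A,B)) + a. -/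
open Set

variable {α : Type*}

section
variable {M : Matroid α}

lemma exch_iff {A : Set α} {x e : α} (hA : M.IsBase A) (hx : x ∈ A) (he : e ∈ M.E)
    (heA : e ∉ A) : M.IsBase (insert e (A \ {x})) ↔ e ∉ M.closure (A \ {x}) := by
  constructor
  · intro h
    have h' := h.indep.notMem_closure_diff_of_mem (mem_insert e _)
    rwa [insert_diff_self_of_notMem (fun h'' => heA h''.1)] at h'
  · intro h
    have hi : M.Indep (insert e (A \ {x})) :=
      ((hA.indep.subset diff_subset).insert_indep_iff_of_notMem
        (fun h'' => heA h''.1)).2 ⟨he, h⟩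
    exact hA.exchange_isBase_of_indep heA hi

lemma fund_exch {A C : Set α} {e x : α} (hA : M.IsBase A) (hC : IsFundCct M C e A)
    (heA : e ∉ A) (hxC : x ∈ C) (hxA : x ∈ A) : M.IsBase (insert e (A \ {x})) := by
  have heE : e ∈ M.E := hC.1.1.subset_ground hC.2.1
  rw [exch_iff hA hxA heE heA]
  intro hecl
  have hCx : M.Indep (C \ {x}) := hC.1.2 _ (sdiff_singleton_ssubset.2 hxC)
  have hxcl : x ∈ M.closure (C \ {x}) := by
    by_contra hx
    have hii : M.Indep (insert x (C \ {x})) :=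
      (hCx.insert_indep_iff_of_notMem (by simp)).2 ⟨hC.1.1.subset_ground hxC, hx⟩
    rw [insert_diff_singleton, insert_eq_of_mem hxC] at hii
    exact hC.1.1.not_indep hii
  have hsub : C \ {x} ⊆ insert e (A \ {x}) := by
    intro z hz
    rcases hC.2.2 hz.1 with rfl | hzA
    · exact mem_insert _ _
    · exact Or.inr ⟨hzA, hz.2⟩
  have hcc : M.closure (insert e (A \ {x})) ⊆ M.closure (A \ {x}) :=
    Matroid.closure_subset_closure_of_subset_closure
      (insert_subset hecl (M.subset_closure _ (diff_subset.trans hA.subset_ground)))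
  exact hA.indep.notMem_closure_diff_of_mem hxA (hcc (M.closure_subset_closure hsub hxcl))

lemma lemA {F : Set α} {u v b y : α} (hFE : insert v F ⊆ M.E)
    (hyu : y ∉ M.closure (insert u F)) (hyv : y ∈ M.closure (insert v F))
    (hbv : b ∉ M.closure (insert v F)) : y ∉ M.closure (insert b F) := by
  have hyF0 : y ∉ M.closure F := fun h => hyu (M.closure_subset_closure (subset_insert u F) h)
  intro hyb
  have hb' : b ∈ M.closure (insert y F) := Matroid.mem_closure_insert hyF0 hyb
  have hsub : M.closure (insert y F) ⊆ M.closure (insert v F) :=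
    Matroid.closure_subset_closure_of_subset_closure
      (insert_subset hyv (M.subset_closure_of_subset (subset_insert v F) hFE))
  exact hbv (hsub hb')

lemma lemB {G : Set α} {u v b y : α} (hGE : insert u G ⊆ M.E) (hyE : y ∈ M.E)
    (huG : u ∉ M.closure G) (hu : u ∈ M.closure (insert b G))
    (hXbase : M.IsBase (insert v (insert b G))) (hyu : y ∉ M.closure (insert u G)) :
    v ∉ M.closure (insert u G) := by
  intro hv
  have hbu : b ∈ M.closure (insert u G) := Matroid.mem_closure_insert huG hu
  have hsub : M.closure (insert v (insert b G)) ⊆ M.closure (insert u G) :=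
    Matroid.closure_subset_closure_of_subset_closure
      (insert_subset hv (insert_subset hbu
        (M.subset_closure_of_subset (subset_insert u G) hGE)))
  exact hyu (hsub (by rw [hXbase.closure_eq]; exact hyE))

lemma symm4 {B : Set α} {P P' Q Q' : α → Prop} {y : α}
    (h : y ∈ symmDiff (symmDiff (symmDiff {z ∈ B | P z ∧ Q z} {z ∈ B | P' z ∧ Q' z})
      {z ∈ B | P' z ∧ Q z}) {z ∈ B | P z ∧ Q' z}) :
    y ∈ B ∧ ¬(P y ↔ P' y) ∧ ¬(Q y ↔ Q' y) := by
  simp only [mem_symmDiff, mem_setOf_eq] at h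
  by_cases hB : y ∈ B
  · refine ⟨hB, ?_, ?_⟩ <;>
      (by_cases hp : P y <;> by_cases hp' : P' y <;>
       by_cases hq : Q y <;> by_cases hq' : Q' y <;> simp_all)
  · simp_all

end

theorem stmt_9 (M : Matroid α) [M.Finite] {A B Ca' Cb : Set α} {a a' b : α}
    (hA : M.IsBase A) (hB : M.IsBase B) (hAB : Disjoint A B)
    (ha : a ∈ A) (hb : b ∈ SymEx M a A B)
    (ha' : a' ∈ A) (hne : a' ≠ a)
    (hCa' : IsFundCct M Ca' a' B) (hCb : IsFundCct M Cb b A)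
    (h1 : b ∈ Ca') (h2 : a' ∈ Cb) :
    insert a (symmDiff (symmDiff (symmDiff (SymEx M a' A B) (SymEx M a A B))
          (ConnEx M a' a A B)) (ConnEx M a a' A B))
        ⊆ SymEx M a' (insert b (A \ {a})) (insert a (B \ {b})) ∧
      SymEx M a' (insert b (A \ {a})) (insert a (B \ {b}))
        ⊆ insert a (SymEx M a' A B ∪ SymEx M a A B ∪ ConnEx M a' a A B ∪ ConnEx M a a' A B) := by
  simp only [SymEx, mem_setOf_eq] at hb
  obtain ⟨hbB, hbA1, hbB1⟩ := hb
  have hbA : b ∉ A := fun h => (disjoint_left.1 hAB h) hbB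
  have haB : a ∉ B := disjoint_left.1 hAB ha
  have ha'B : a' ∉ B := disjoint_left.1 hAB ha'
  have hab : a ≠ b := fun h => hbA (h ▸ ha)
  have ha'b : a' ≠ b := fun h => hbA (h ▸ ha')
  have haE : a ∈ M.E := hA.subset_ground ha
  have ha'E : a' ∈ M.E := hA.subset_ground ha'
  have hbE : b ∈ M.E := hB.subset_ground hbB
  have hP2' : M.IsBase (insert b (A \ {a'})) := fund_exch hA hCb hbA h2 ha'
  have hQ2' : M.IsBase (insert a' (B \ {b})) := fund_exch hB hCa' ha'B h1 hbB
  -- F and its identities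
  set F : Set α := (A \ {a}) \ {a'} with hF
  have sF1 : insert b (A \ {a}) \ {a'} = insert b F :=
    (insert_diff_singleton_comm (Ne.symm ha'b) _).symm
  have sF2 : insert a' F = A \ {a} := by
    rw [hF, insert_diff_singleton, insert_eq_of_mem (show a' ∈ A \ {a} from ⟨ha', hne⟩)]
  have sF3 : insert a F = A \ {a'} := by
    rw [hF, diff_diff_comm, insert_diff_singleton, insert_eq_of_mem (show a ∈ A \ {a'} from ⟨ha, Ne.symm hne⟩)]
  have sA : insert a (insert a' F) = A := by
    rw [sF2, insert_diff_singleton, insert_eq_of_mem ha]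
  have hFE : F ⊆ M.E := (diff_subset.trans diff_subset).trans hA.subset_ground
  have hbF : b ∉ F := fun h => hbA h.1.1
  constructor
  · -- lower bound
    intro y hy
    simp only [SymEx, mem_setOf_eq]
    rcases mem_insert_iff.1 hy with hc | hy
    · -- y = a
      rw [hc]
      refine ⟨mem_insert _ _, ?_, ?_⟩
      · have e1 : insert a (insert b (A \ {a}) \ {a'}) = insert b (A \ {a'}) := by
          rw [sF1, insert_comm, sF3]
        rw [e1]; exact hP2'
      · have e2 : insert a (B \ {b}) \ {a} = B \ {b} :=
          insert_diff_self_of_notMem (fun h => haB h.1)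
        rw [e2]; exact hQ2'
    · simp only [SymEx, ConnEx] at hy
      obtain ⟨hyB, hPP', hQQ'⟩ := symm4 (P := fun z => M.IsBase (insert z (A \ {a'})))
        (P' := fun z => M.IsBase (insert z (A \ {a})))
        (Q := fun z => M.IsBase (insert a' (B \ {z})))
        (Q' := fun z => M.IsBase (insert a (B \ {z}))) hy
      have hyA : y ∉ A := fun h => disjoint_left.1 hAB h hyB
      have hyE : y ∈ M.E := hB.subset_ground hyB
      have hya : y ≠ a := fun h => haB (h ▸ hyB)
      have hya' : y ≠ a' := fun h => ha'B (h ▸ hyB)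
      have hyb : y ≠ b := by rintro rfl; exact hPP' (iff_of_true hP2' hbA1)
      rw [exch_iff hA ha' hyE hyA, exch_iff hA ha hyE hyA] at hPP'
      rw [exch_iff hB hyB ha'E ha'B, exch_iff hB hyB haE haB] at hQQ'
      -- the A-side: y ∉ cl (insert b F)
      have hbFa : b ∉ M.closure (A \ {a}) := (exch_iff hA ha hbE hbA).1 hbA1
      have hbFa' : b ∉ M.closure (A \ {a'}) := (exch_iff hA ha' hbE hbA).1 hP2'
      have hycl : y ∉ M.closure (insert b F) := by
        by_cases hc : y ∈ M.closure (A \ {a'})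
        · have hc2 : y ∉ M.closure (A \ {a}) := by tauto
          rw [← sF2] at hc2
          rw [← sF3] at hc hbFa'
          exact lemA (sF3 ▸ (diff_subset.trans hA.subset_ground)) hc2 hc hbFa'
        · have hc2 : y ∈ M.closure (A \ {a}) := by tauto
          rw [← sF3] at hc
          rw [← sF2] at hc2 hbFa
          exact lemA (sF2 ▸ (diff_subset.trans hA.subset_ground)) hc hc2 hbFa
      have hDind : M.Indep (insert y (insert b F)) := by
        have hbFi : M.Indep (insert b F) := hbA1.indep.subset (by rw [← sF1]; exact diff_subset)
        exact (hbFi.insert_indep_iff_of_notMem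
          (by simp only [mem_insert_iff]; push_neg; exact ⟨hyb, fun h => hyA h.1.1⟩)).2 ⟨hyE, hycl⟩
      have hDbase : M.IsBase (insert y (insert b (A \ {a}) \ {a'})) := by
        refine hbA1.exchange_isBase_of_indep ?_ ?_
        · simp only [mem_insert_iff]; push_neg; exact ⟨hyb, fun h => hyA h.1⟩
        · rw [sF1]; exact hDind
      -- the B-side
      set G : Set α := (B \ {b}) \ {y} with hG
      have hGE : G ⊆ M.E := (diff_subset.trans diff_subset).trans hB.subset_ground
      have sG2 : insert b G = B \ {y} := by
        rw [hG, diff_diff_comm, insert_diff_singleton, insert_eq_of_mem (show b ∈ B \ {y} from ⟨hbB, Ne.symm hyb⟩)]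
      have sG3 : insert y G = B \ {b} := by
        rw [hG, insert_diff_singleton, insert_eq_of_mem (show y ∈ B \ {b} from ⟨hyB, hyb⟩)]
      have sG1 : insert a (B \ {b}) \ {y} = insert a G :=
        (insert_diff_singleton_comm (Ne.symm hya) _).symm
      have sG4 : insert a' (B \ {b}) \ {y} = insert a' G :=
        (insert_diff_singleton_comm (Ne.symm hya') _).symm
      have haG : a ∉ G := fun h => haB h.1.1
      have ha'G : a' ∉ G := fun h => ha'B h.1.1
      have hya'G : y ∉ M.closure (insert a' G) := by
        have := hQ2'.indep.notMem_closure_diff_of_mem (Or.inr ⟨hyB, hyb⟩)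
        rwa [sG4] at this
      have hyaG : y ∉ M.closure (insert a G) := by
        have := hbB1.indep.notMem_closure_diff_of_mem (Or.inr ⟨hyB, hyb⟩)
        rwa [sG1] at this
      have ha'clG : a' ∉ M.closure G := by
        have := hQ2'.indep.notMem_closure_diff_of_mem (mem_insert _ _)
        rw [insert_diff_self_of_notMem (fun h => ha'B h.1)] at this
        exact fun h => this (by rw [← sG3]; exact M.closure_subset_closure (subset_insert y G) h)
      have haclG : a ∉ M.closure G := by
        have := hbB1.indep.notMem_closure_diff_of_mem (mem_insert _ _)
        rw [insert_diff_self_of_notMem (fun h => haB h.1)] at this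
        exact fun h => this (by rw [← sG3]; exact M.closure_subset_closure (subset_insert y G) h)
      have hEind : M.Indep (insert a' (insert a G)) := by
        by_cases hc : a' ∈ M.closure (B \ {y})
        · have hc2 : a ∉ M.closure (B \ {y}) := by tauto
          rw [← sG2] at hc hc2
          have hXbase : M.IsBase (insert a (insert b G)) := by
            rw [sG2]; exact (exch_iff hB hyB haE haB).2 (sG2 ▸ hc2)
          have hkey : a ∉ M.closure (insert a' G) :=
            lemB (insert_subset ha'E hGE) hyE ha'clG hc hXbase hya'G
          have ha'Gi : M.Indep (insert a' G) :=
            hQ2'.indep.subset (by rw [← sG4]; exact diff_subset)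
          have := (ha'Gi.insert_indep_iff_of_notMem
            (by simp only [mem_insert_iff]; push_neg;
                exact ⟨Ne.symm hne, haG⟩)).2 ⟨haE, hkey⟩
          rwa [insert_comm] at this
        · have hc2 : a' ∉ M.closure (B \ {y}) := by tauto
          rw [← sG2] at hc hc2
          have hc' : a ∈ M.closure (insert b G) := by
            by_contra hcc
            rw [sG2] at hcc hc2
            exact hQQ' (iff_of_true hc2 hcc)
          have hXbase : M.IsBase (insert a' (insert b G)) := by
            rw [sG2]; exact (exch_iff hB hyB ha'E ha'B).2 (sG2 ▸ hc2)
          have hkey : a' ∉ M.closure (insert a G) :=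
            lemB (insert_subset haE hGE) hyE haclG hc' hXbase hyaG
          have haGi : M.Indep (insert a G) :=
            hbB1.indep.subset (by rw [← sG1]; exact diff_subset)
          exact (haGi.insert_indep_iff_of_notMem
            (by simp only [mem_insert_iff]; push_neg; exact ⟨hne, ha'G⟩)).2 ⟨ha'E, hkey⟩
      have hEbase : M.IsBase (insert a' (insert a (B \ {b}) \ {y})) := by
        refine hbB1.exchange_isBase_of_indep ?_ ?_
        · simp only [mem_insert_iff]; push_neg; exact ⟨hne, fun h => ha'B h.1⟩
        · rw [sG1]; exact hEind
      exact ⟨Or.inr ⟨hyB, hyb⟩, hDbase, hEbase⟩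
  · -- upper bound
    intro y hy
    simp only [SymEx, mem_setOf_eq] at hy
    obtain ⟨hyB', hD, hE⟩ := hy
    rcases mem_insert_iff.1 hyB' with hc | hyB2
    · exact hc ▸ mem_insert _ _
    · obtain ⟨hyB, hyb0⟩ := hyB2
      have hyb : y ≠ b := fun h => hyb0 h
      have hyA : y ∉ A := fun h => disjoint_left.1 hAB h hyB
      have hyE : y ∈ M.E := hB.subset_ground hyB
      have hya : y ≠ a := fun h => haB (h ▸ hyB)
      have hya' : y ≠ a' := fun h => ha'B (h ▸ hyB)
      right
      have hDind : M.Indep (insert y (insert b F)) := by rw [← sF1]; exact hD.indep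
      -- A side
      have hP : M.IsBase (insert y (A \ {a'})) ∨ M.IsBase (insert y (A \ {a})) := by
        rw [exch_iff hA ha' hyE hyA, exch_iff hA ha hyE hyA]
        by_contra hcon
        push_neg at hcon
        obtain ⟨h1', h2'⟩ := hcon
        have hyFb : y ∉ M.closure (insert b F) := by
          have := hDind.notMem_closure_diff_of_mem (mem_insert _ _)
          rwa [insert_diff_self_of_notMem (by
            simp only [mem_insert_iff]; push_neg; exact ⟨hyb, fun h => hyA h.1.1⟩)] at this
        have hyF0 : y ∉ M.closure F :=
          fun h => hyFb (M.closure_subset_closure (subset_insert b F) h)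
        have hacl : a ∈ M.closure (insert y F) :=
          Matroid.mem_closure_insert hyF0 (by rw [sF3]; exact h1')
        have ha'cl : a' ∈ M.closure (insert y F) :=
          Matroid.mem_closure_insert hyF0 (by rw [sF2]; exact h2')
        have hAsub : A ⊆ M.closure (insert y F) := by
          rw [← sA]
          exact insert_subset hacl (insert_subset ha'cl
            (M.subset_closure_of_subset (subset_insert y F) (insert_subset hyE hFE)))
        have hbin : b ∈ M.closure (insert y F) := by
          have : M.E ⊆ M.closure (insert y F) := by
            rw [← hA.closure_eq]
            exact Matroid.closure_subset_closure_of_subset_closure hAsub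
          exact this hbE
        have hbni : b ∉ M.closure (insert y F) := by
          have := hDind.notMem_closure_diff_of_mem (Or.inr (mem_insert _ _))
          rwa [← insert_diff_singleton_comm hyb _,
            insert_diff_self_of_notMem hbF] at this
        exact hbni hbin
      -- B side
      set G : Set α := (B \ {b}) \ {y} with hG
      have hGE : G ⊆ M.E := (diff_subset.trans diff_subset).trans hB.subset_ground
      have sG2 : insert b G = B \ {y} := by
        rw [hG, diff_diff_comm, insert_diff_singleton, insert_eq_of_mem (show b ∈ B \ {y} from ⟨hbB, Ne.symm hyb⟩)]
      have sG1 : insert a (B \ {b}) \ {y} = insert a G :=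
        (insert_diff_singleton_comm (Ne.symm hya) _).symm
      have haG : a ∉ G := fun h => haB h.1.1
      have ha'G : a' ∉ G := fun h => ha'B h.1.1
      have hEind : M.Indep (insert a' (insert a G)) := by rw [← sG1]; exact hE.indep
      have hQ : M.IsBase (insert a' (B \ {y})) ∨ M.IsBase (insert a (B \ {y})) := by
        rw [exch_iff hB hyB ha'E ha'B, exch_iff hB hyB haE haB]
        by_contra hcon
        push_neg at hcon
        obtain ⟨h1', h2'⟩ := hcon
        rw [← sG2] at h1' h2'
        have ha'ni : a' ∉ M.closure (insert a G) := by
          have := hEind.notMem_closure_diff_of_mem (mem_insert _ _)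
          rwa [insert_diff_self_of_notMem (by
            simp only [mem_insert_iff]; push_neg; exact ⟨hne, ha'G⟩)] at this
        have haG0 : a ∉ M.closure G := by
          have := hEind.notMem_closure_diff_of_mem (Or.inr (mem_insert _ _))
          rw [← insert_diff_singleton_comm hne _,
            insert_diff_self_of_notMem haG] at this
          exact fun h => this (M.closure_subset_closure (subset_insert a' G) h)
        have hbcl : b ∈ M.closure (insert a G) := Matroid.mem_closure_insert haG0 h2'
        have hsub : M.closure (insert b G) ⊆ M.closure (insert a G) :=
          Matroid.closure_subset_closure_of_subset_closure
            (insert_subset hbcl (M.subset_closure_of_subset (subset_insert a G)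
              (insert_subset haE hGE)))
        exact ha'ni (hsub h1')
      simp only [mem_union, SymEx, ConnEx, mem_setOf_eq]
      rcases hP with hp | hp <;> rcases hQ with hq | hq
      · exact Or.inl (Or.inl (Or.inl ⟨hyB, hp, hq⟩))
      · exact Or.inr ⟨hyB, hp, hq⟩
      · exact Or.inl (Or.inr ⟨hyB, hp, hq⟩)
      · exact Or.inl (Or.inl (Or.inr ⟨hyB, hp, hq⟩))
end

section
/- Let B be a basis in a binary matroid M, let x and y be distinct elements not in B, and suppose b ∈ C(x,B) ∩ C(y,B). Then, with B_{b,x} := B - b + x (which is a basis), one has C(y, B_{b,x}) = C(x,B) △ C(y,B). -/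
open Set

variable {α : Type*}

/-- Every dependent set in a finite matroid contains a circuit. -/
lemma exists_circuit_subset (M : Matroid α) [M.Finite] {D : Set α} (hD : M.Dep D) :
    ∃ C, C ⊆ D ∧ IsCircuit M C := by
  have hfin : D.Finite := M.set_finite D hD.subset_ground
  set S : Set (Set α) := {C | C ⊆ D ∧ M.Dep C} with hS
  have hSfin : S.Finite := hfin.finite_subsets.subset (fun C hC => hC.1)
  have hSne : S.Nonempty := ⟨D, rfl.subset, hD⟩
  obtain ⟨C, hCS, hmin⟩ := Set.Finite.exists_minimalFor id S hSfin hSne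
  refine ⟨C, hCS.1, hCS.2, fun D' hD' => ?_⟩
  by_contra hcon
  have hD'E : D' ⊆ M.E := hD'.subset.trans hCS.2.subset_ground
  have : D' ∈ S := ⟨hD'.subset.trans hCS.1, hcon, hD'E⟩
  exact hD'.ne.symm (Subset.antisymm (hmin this hD'.subset) hD'.subset)

/-- Uniqueness of circuits inside `insert z I` for `I` independent, in a binary matroid. -/
lemma circuit_unique (M : Matroid α) (hM : Binary M) {I : Set α} (hI : M.Indep I) {z : α}
    {C₁ C₂ : Set α} (h₁ : IsCircuit M C₁) (h₂ : IsCircuit M C₂)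
    (s₁ : C₁ ⊆ insert z I) (s₂ : C₂ ⊆ insert z I) : C₁ = C₂ := by
  have hz : ∀ C : Set α, IsCircuit M C → C ⊆ insert z I → z ∈ C := by
    intro C hC hCs
    by_contra hzC
    have hCI : C ⊆ I := fun a ha => ((mem_insert_iff.1 (hCs ha)).resolve_left
      (by rintro rfl; exact hzC ha))
    exact hC.1.not_indep (hI.subset hCI)
  by_contra hne
  obtain ⟨C, hC, hsub⟩ := hM C₁ C₂ h₁ h₂ hne
  have hCI : C ⊆ I := by
    intro a ha
    have h' := mem_symmDiff.1 (hsub ha)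
    have haz : a ≠ z := by
      rintro rfl
      rcases h' with ⟨_, h⟩ | ⟨_, h⟩
      · exact h (hz C₂ h₂ s₂)
      · exact h (hz C₁ h₁ s₁)
    rcases h' with ⟨h, _⟩ | ⟨h, _⟩
    · exact (mem_insert_iff.1 (s₁ h)).resolve_left haz
    · exact (mem_insert_iff.1 (s₂ h)).resolve_left haz
  exact hC.1.not_indep (hI.subset hCI)

theorem stmt_13 (M : Matroid α) [M.Finite] {B Cx Cy : Set α} {x y b : α}
    (hM : Binary M) (hB : M.IsBase B) (hx : x ∉ B) (hy : y ∉ B) (hxy : x ≠ y)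
    (hCx : IsFundCct M Cx x B) (hCy : IsFundCct M Cy y B)
    (hbx : b ∈ Cx) (hby : b ∈ Cy) :
    M.IsBase (insert x (B \ {b})) ∧
      ∀ Cy', IsFundCct M Cy' y (insert x (B \ {b})) → Cy' = symmDiff Cx Cy := by
  obtain ⟨hCxc, hxCx, hCxB⟩ := hCx
  obtain ⟨hCyc, hyCy, hCyB⟩ := hCy
  have hbnx : b ≠ x := by
    rintro rfl
    rcases mem_insert_iff.1 (hCyB hby) with h | h
    · exact hxy h
    · exact hx h
  have hbny : b ≠ y := by
    rintro rfl
    rcases mem_insert_iff.1 (hCxB hbx) with h | h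
    · exact hxy h.symm
    · exact hy h
  have hbB : b ∈ B := (mem_insert_iff.1 (hCxB hbx)).resolve_left hbnx
  set B' : Set α := insert x (B \ {b}) with hB'def
  have hxE : x ∈ M.E := hCxc.1.subset_ground hxCx
  have hB'E : B' ⊆ M.E := insert_subset hxE (diff_subset.trans hB.subset_ground)
  have hB'subxB : B' ⊆ insert x B := insert_subset_insert diff_subset
  have hbB' : b ∉ B' := by
    intro h
    rcases mem_insert_iff.1 h with h | h
    · exact hbnx h
    · exact h.2 rfl
  have hB'indep : M.Indep B' := by
    by_contra hcon
    obtain ⟨C0, hC0sub, hC0⟩ := exists_circuit_subset M (⟨hcon, hB'E⟩ : M.Dep B')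
    have : C0 = Cx := circuit_unique M hM hB.indep hC0 hCxc
      (hC0sub.trans hB'subxB) hCxB
    exact hbB' (hC0sub (this ▸ hbx))
  have hB'base : M.IsBase B' := hB.exchange_isBase_of_indep hx hB'indep
  refine ⟨hB'base, ?_⟩
  rintro Cy' ⟨hCy'c, hyCy', hCy'B'⟩
  set Z : Set α := symmDiff Cx Cy with hZdef
  have hxZ : x ∈ Z := by
    refine mem_symmDiff.2 (Or.inl ⟨hxCx, fun h => ?_⟩)
    rcases mem_insert_iff.1 (hCyB h) with h' | h'
    · exact hxy h'
    · exact hx h'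
  have hbCy' : b ∉ Cy' := by
    intro h
    rcases mem_insert_iff.1 (hCy'B' h) with h' | h'
    · exact hbny h'
    · exact hbB' h'
  have hZsub : Z ⊆ insert y B' := by
    intro a ha
    have hab : a ≠ b := by
      rintro rfl
      rcases mem_symmDiff.1 ha with ⟨_, h⟩ | ⟨_, h⟩
      · exact h hby
      · exact h hbx
    rcases mem_symmDiff.1 ha with ⟨h, _⟩ | ⟨h, _⟩
    · rcases mem_insert_iff.1 (hCxB h) with h' | h'
      · exact mem_insert_iff.2 (Or.inr (mem_insert_iff.2 (Or.inl h')))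
      · exact mem_insert_iff.2 (Or.inr (mem_insert_iff.2 (Or.inr ⟨h', hab⟩)))
    · rcases mem_insert_iff.1 (hCyB h) with h' | h'
      · exact mem_insert_iff.2 (Or.inl h')
      · exact mem_insert_iff.2 (Or.inr (mem_insert_iff.2 (Or.inr ⟨h', hab⟩)))
  -- the circuit from Binary applied to Cx, Cy equals Cy'
  have hCxCyne : Cx ≠ Cy := by
    intro h
    have : x ∈ Cy := h ▸ hxCx
    rcases mem_insert_iff.1 (hCyB this) with h' | h'
    · exact hxy h'
    · exact hx h'
  obtain ⟨C, hCc, hCsub⟩ := hM Cx Cy hCxc hCyc hCxCyne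
  have hCeq : C = Cy' := circuit_unique M hM hB'base.indep hCc hCy'c
    (hCsub.trans hZsub) hCy'B'
  have hCy'Z : Cy' ⊆ Z := hCeq ▸ hCsub
  have hxCy' : x ∈ Cy' := by
    by_contra hcon
    have hsub : Cy' ⊆ insert y B := by
      intro a ha
      rcases mem_insert_iff.1 (hCy'B' ha) with h | h
      · exact mem_insert_iff.2 (Or.inl h)
      · rcases mem_insert_iff.1 h with h' | h'
        · exact absurd (h' ▸ ha) hcon
        · exact mem_insert_iff.2 (Or.inr h'.1)
    have : Cy' = Cy := circuit_unique M hM hB.indep hCy'c hCyc hsub hCyB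
    exact hbCy' (this ▸ hby)
  set I : Set α := Z \ Cy' with hIdef
  have hIB : I ⊆ B := by
    rintro a ⟨haZ, haCy'⟩
    have hay : a ≠ y := by rintro rfl; exact haCy' hyCy'
    have hax : a ≠ x := by rintro rfl; exact haCy' hxCy'
    rcases mem_symmDiff.1 haZ with ⟨h, _⟩ | ⟨h, _⟩
    · exact (mem_insert_iff.1 (hCxB h)).resolve_left hax
    · exact (mem_insert_iff.1 (hCyB h)).resolve_left hay
  -- Cy ≠ Cy', apply Binary: circuit D ⊆ Cy ∆ Cy' ⊆ Cx ∪ I ⊆ insert x B, so D = Cx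
  have hCyCy'ne : Cy ≠ Cy' := by intro h; exact hbCy' (h ▸ hby)
  obtain ⟨D, hDc, hDsub⟩ := hM Cy Cy' hCyc hCy'c hCyCy'ne
  have hDxB : D ⊆ insert x B := by
    intro a ha
    rcases mem_symmDiff.1 (hDsub ha) with ⟨h1, h2⟩ | ⟨h1, h2⟩
    · by_cases hax : a ∈ Cx
      · exact hCxB hax
      · have haZ : a ∈ Z := mem_symmDiff.2 (Or.inr ⟨h1, hax⟩)
        exact mem_insert_iff.2 (Or.inr (hIB ⟨haZ, h2⟩))
    · have haZ : a ∈ Z := hCy'Z h1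
      rcases mem_symmDiff.1 haZ with ⟨h, _⟩ | ⟨h, _⟩
      · exact hCxB h
      · exact absurd h h2
  have hDCx : D = Cx := circuit_unique M hM hB.indep hDc hCxc hDxB hCxB
  have hCxI : ∀ a ∈ Cx, a ∉ I := by
    rintro a haCx ⟨haZ, haCy'⟩
    have haCy : a ∉ Cy := by
      rcases mem_symmDiff.1 haZ with ⟨_, h⟩ | ⟨h, _⟩
      · exact h
      · intro h'; exact ((mem_symmDiff.1 haZ).elim (fun p => p.2 h) (fun p => p.2 haCx))
    have : a ∈ symmDiff Cy Cy' := hDsub (hDCx ▸ haCx)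
    rcases mem_symmDiff.1 this with ⟨h, _⟩ | ⟨h, _⟩
    · exact haCy h
    · exact haCy' h
  -- Cx ≠ Cy', apply Binary: circuit E ⊆ Cx ∆ Cy' ⊆ Cy ∪ I ⊆ insert y B, so E = Cy
  have hCxCy'ne : Cx ≠ Cy' := by intro h; exact hbCy' (h ▸ hbx)
  obtain ⟨E, hEc, hEsub⟩ := hM Cx Cy' hCxc hCy'c hCxCy'ne
  have hEyB : E ⊆ insert y B := by
    intro a ha
    rcases mem_symmDiff.1 (hEsub ha) with ⟨h1, h2⟩ | ⟨h1, h2⟩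
    · by_cases hay : a ∈ Cy
      · exact hCyB hay
      · have haZ : a ∈ Z := mem_symmDiff.2 (Or.inl ⟨h1, hay⟩)
        exact mem_insert_iff.2 (Or.inr (hIB ⟨haZ, h2⟩))
    · have haZ : a ∈ Z := hCy'Z h1
      rcases mem_symmDiff.1 haZ with ⟨h, _⟩ | ⟨h, _⟩
      · exact absurd h h2
      · exact hCyB h
  have hECy : E = Cy := circuit_unique M hM hB.indep hEc hCyc hEyB hCyB
  have hCyI : ∀ a ∈ Cy, a ∉ I := by
    rintro a haCy ⟨haZ, haCy'⟩
    have haCx : a ∉ Cx := by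
      rcases mem_symmDiff.1 haZ with ⟨h, p⟩ | ⟨_, h⟩
      · exact absurd haCy p
      · exact h
    have : a ∈ symmDiff Cx Cy' := hEsub (hECy ▸ haCy)
    rcases mem_symmDiff.1 this with ⟨h, _⟩ | ⟨h, _⟩
    · exact haCx h
    · exact haCy' h
  -- I is empty, so Z ⊆ Cy'
  have hZCy' : Z ⊆ Cy' := by
    intro a haZ
    by_contra hcon
    have haI : a ∈ I := ⟨haZ, hcon⟩
    rcases mem_symmDiff.1 haZ with ⟨h, _⟩ | ⟨h, _⟩
    · exact hCxI a h haI
    · exact hCyI a h haI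
  exact Subset.antisymm hCy'Z hZCy'
end

section
/- A matroid M is binary if and only if for every basis B of M, every b ∈ B and x ∉ B such that B_{b,x} := B - b + x is a basis, and every y ∉ B with y ≠ x and b ∈ C(y,B), one has C(y, B_{b,x}) = C(x,B) △ C(y,B). -/
open Set

variable {α : Type*}

open scoped symmDiff

namespace BinAux

variable {M : Matroid α} {B B' C C₁ C₂ D : Set α} {x y b e u : α}

lemma circuit_dep (h : IsCircuit M C) : M.Dep C := h.1

lemma circuit_subset_ground (h : IsCircuit M C) : C ⊆ M.E := h.1.subset_ground

lemma circuit_diff_indep (h : IsCircuit M C) (he : e ∈ C) : M.Indep (C \ {e}) :=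
  h.2 _ (sdiff_singleton_ssubset.2 he)

lemma circuit_eq_of_subset (h : IsCircuit M C) (h' : IsCircuit M C₁) (hsub : C₁ ⊆ C) :
    C₁ = C := by
  rcases hsub.eq_or_ssubset with h1 | h1
  · exact h1
  · exact absurd (h.2 _ h1) h'.1.not_indep

lemma exists_circuit_subset [M.Finite] (hD : M.Dep D) : ∃ C, C ⊆ D ∧ IsCircuit M C := by
  have hfin : {D' | D' ⊆ D ∧ M.Dep D'}.Finite := by
    apply (M.set_finite D hD.subset_ground).finite_subsets.subset
    exact fun D' hD' => hD'.1
  obtain ⟨C, hC, hmin0⟩ := Set.Finite.exists_minimalFor id _ hfin ⟨D, Subset.rfl, hD⟩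
  have hmin : ∀ D' ∈ {D' | D' ⊆ D ∧ M.Dep D'}, id D' ≤ id C → id C = id D' :=
    fun D' h1 h2 => (hmin0 h1 h2).antisymm h2
  refine ⟨C, hC.1, hC.2, fun D' hD' => ?_⟩
  by_contra hind
  have hD'E : D' ⊆ M.E := hD'.subset.trans hC.2.subset_ground
  have h2 := hmin D' ⟨hD'.subset.trans hC.1, Matroid.dep_of_not_indep hind⟩ hD'.subset
  simp only [id] at h2
  exact hD'.ne h2.symm

lemma mem_of_circuit_subset_insert (hBi : M.Indep B) (hC : IsCircuit M C)
    (hsub : C ⊆ insert x B) : x ∈ C := by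
  by_contra hx
  have : C ⊆ B := fun a ha => ((hsub ha).resolve_left (fun h => hx (h ▸ ha)))
  exact (hBi.subset this).not_dep hC.1

lemma circuit_mem_closure (h : IsCircuit M C) (he : e ∈ C) : e ∈ M.closure (C \ {e}) := by
  have hI := circuit_diff_indep h he
  have hdep : M.Dep (insert e (C \ {e})) := by
    rw [insert_diff_singleton, insert_eq_self.2 he]; exact h.1
  exact ((hI.insert_dep_iff).1 hdep).1

lemma fundCct_unique (hB : M.IsBase B) (hx : x ∉ B) (h₁ : IsFundCct M C₁ x B)
    (h₂ : IsFundCct M C₂ x B) : C₁ = C₂ := by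
  by_contra hne
  obtain ⟨e, heC₂, heC₁⟩ : ∃ e, e ∈ C₂ ∧ e ∉ C₁ := by
    by_contra h
    push_neg at h
    exact hne (circuit_eq_of_subset h₁.1 h₂.1 h).symm
  have hex : e ≠ x := fun h => heC₁ (h ▸ h₁.2.1)
  have heB : e ∈ B := (h₂.2.2 heC₂).resolve_left hex
  have hxcl : x ∈ M.closure (B \ {e}) := by
    refine M.closure_subset_closure ?_ (circuit_mem_closure h₁.1 h₁.2.1)
    intro a ha
    have haB : a ∈ B := (h₁.2.2 ha.1).resolve_left ha.2
    exact ⟨haB, fun h => heC₁ (h ▸ ha.1)⟩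
  have hecl : e ∈ M.closure (insert x (B \ {e})) := by
    refine M.closure_subset_closure ?_ (circuit_mem_closure h₂.1 heC₂)
    intro a ha
    rcases h₂.2.2 ha.1 with h | h
    · exact h ▸ mem_insert _ _
    · exact mem_insert_of_mem _ ⟨h, ha.2⟩
  rw [Matroid.closure_insert_eq_of_mem_closure hxcl] at hecl
  exact hB.indep.notMem_closure_sdiff_of_mem heB hecl

lemma exists_fundCct [M.Finite] (hB : M.IsBase B) (hxE : x ∈ M.E) (hx : x ∉ B) :
    ∃ C, IsFundCct M C x B := by
  obtain ⟨C, hsub, hC⟩ := exists_circuit_subset (hB.insert_dep ⟨hxE, hx⟩)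
  exact ⟨C, hC, mem_of_circuit_subset_insert hB.indep hC hsub, hsub⟩

open scoped Classical in
noncomputable def fc (M : Matroid α) (x : α) (B : Set α) : Set α :=
  if h : ∃ C, IsFundCct M C x B then h.choose else ∅

open scoped Classical in
lemma fc_spec (h : ∃ C, IsFundCct M C x B) : IsFundCct M (fc M x B) x B := by
  rw [fc, dif_pos h]; exact h.choose_spec

lemma eq_fc (hB : M.IsBase B) (hx : x ∉ B) (hC : IsFundCct M C x B) : C = fc M x B :=
  fundCct_unique hB hx hC (fc_spec ⟨C, hC⟩)

lemma base_exchange_of_fundCct [M.Finite] (hB : M.IsBase B) (hxB : x ∉ B)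
    (hC : IsFundCct M C x B) (hb : b ∈ C) (hbx : b ≠ x) : M.IsBase (insert x (B \ {b})) := by
  have hbB : b ∈ B := (hC.2.2 hb).resolve_left hbx
  have hxE : x ∈ M.E := circuit_subset_ground hC.1 hC.2.1
  refine hB.exchange_isBase_of_indep hxB ?_
  rw [← Matroid.not_dep_iff (insert_subset hxE (diff_subset.trans hB.subset_ground))]
  intro hdep
  obtain ⟨C', hsub, hC'⟩ := exists_circuit_subset hdep
  have hxC' : x ∈ C' := mem_of_circuit_subset_insert (hB.indep.subset diff_subset) hC' hsub
  have : C' = C := fundCct_unique hB hxB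
    ⟨hC', hxC', hsub.trans (insert_subset_insert diff_subset)⟩ hC
  subst this
  rcases hsub hb with h | h
  · exact hbx h
  · exact h.2 rfl

end BinAux


open scoped symmDiff
section SdSum

variable {α : Type*}

instance : Std.Commutative (fun (s t : Set α) => s ∆ t) := ⟨symmDiff_comm⟩
instance : Std.Associative (fun (s t : Set α) => s ∆ t) := ⟨symmDiff_assoc⟩

def sdSum (S : Finset α) (f : α → Set α) : Set α := S.fold (· ∆ ·) ∅ f

@[simp] lemma sdSum_empty (f : α → Set α) : sdSum (∅ : Finset α) f = ∅ := Finset.fold_empty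

lemma sdSum_insert [DecidableEq α] {S : Finset α} {a : α} (h : a ∉ S) (f : α → Set α) :
    sdSum (insert a S) f = f a ∆ sdSum S f := Finset.fold_insert h

lemma not_mem_sdSum {S : Finset α} {a : α} {f : α → Set α} (h : ∀ y ∈ S, a ∉ f y) :
    a ∉ sdSum S f := by
  classical
  induction S using Finset.induction_on with
  | empty => simp
  | @insert c T hnotmem ih =>
    rw [sdSum_insert hnotmem]
    intro hmem
    rw [Set.mem_symmDiff] at hmem
    rcases hmem with ⟨h1, _⟩ | ⟨h1, _⟩
    · exact h c (Finset.mem_insert_self _ _) h1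
    · exact ih (fun y hy => h y (Finset.mem_insert_of_mem hy)) h1

lemma sdSum_symmDiff (S : Finset α) (f g : α → Set α) :
    sdSum S (fun y => f y ∆ g y) = sdSum S f ∆ sdSum S g := by
  classical
  induction S using Finset.induction_on with
  | empty => simp
  | @insert c T hnotmem ih =>
    rw [sdSum_insert hnotmem, sdSum_insert hnotmem, sdSum_insert hnotmem, ih]
    rw [symmDiff_assoc, symmDiff_assoc]
    congr 1
    rw [symmDiff_left_comm]

lemma sdSum_ite (S : Finset α) (A : Set α) (p : α → Prop) [DecidablePred p] :
    sdSum S (fun y => if p y then A else ∅) =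
      if Even (S.filter p).card then (∅ : Set α) else A := by
  classical
  induction S using Finset.induction_on with
  | empty => simp
  | @insert c T hnotmem ih =>
    rw [sdSum_insert hnotmem, ih, Finset.filter_insert]
    by_cases hp : p c
    · rw [if_pos hp, if_pos hp, Finset.card_insert_of_notMem (fun h => hnotmem (Finset.mem_of_mem_filter _ h))]
      by_cases he : Even (T.filter p).card
      · rw [if_pos he, if_neg (by simp [Nat.even_add_one, he])]
        simp
      · rw [if_neg he, if_pos (by simp [Nat.even_add_one, he])]
        simp
    · rw [if_neg hp, if_neg hp]
      simp

end SdSum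

namespace BinAux

variable {α : Type*} {M : Matroid α}

def Hyp (M : Matroid α) : Prop :=
  ∀ (B Cx Cy Cy' : Set α) (b x y : α), M.IsBase B → b ∈ B → x ∉ B →
    M.IsBase (insert x (B \ {b})) → y ∉ B → y ≠ x →
    IsFundCct M Cx x B → IsFundCct M Cy y B → b ∈ Cx → b ∈ Cy →
    IsFundCct M Cy' y (insert x (B \ {b})) →
    Cy' = symmDiff Cx Cy

lemma empty_symmDiff' (X : Set α) : (∅ : Set α) ∆ X = X := by
  ext a; simp [Set.mem_symmDiff]

lemma circuit_eq_sdSum [M.Finite] (hH : Hyp M) :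
    ∀ (n : ℕ) (B C : Set α) (S : Finset α), M.IsBase B → IsCircuit M C →
      (S : Set α) = C \ B → S.card = n → C = sdSum S (fun y => fc M y B) := by
  classical
  intro n
  induction n using Nat.strong_induction_on with
  | _ n IH =>
  intro B C S hB hC hSC hcard
  have hSne : S.Nonempty := by
    rw [Finset.nonempty_iff_ne_empty]
    rintro rfl
    have hCB : C ⊆ B := diff_eq_empty.1 (by simpa using hSC.symm)
    exact (hB.indep.subset hCB).not_dep hC.1
  obtain ⟨u, huS⟩ := hSne
  have huCB : u ∈ C \ B := by rw [← hSC]; exact_mod_cast huS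
  have huC := huCB.1
  have huB := huCB.2
  have huE : u ∈ M.E := circuit_subset_ground hC huC
  have hfcu : IsFundCct M (fc M u B) u B := fc_spec (exists_fundCct hB huE huB)
  by_cases hcase : ∃ b ∈ fc M u B, b ≠ u ∧ b ∉ C
  · obtain ⟨b, hbA, hbu, hbC⟩ := hcase
    have hbB : b ∈ B := (hfcu.2.2 hbA).resolve_left hbu
    have hB' : M.IsBase (insert u (B \ {b})) := base_exchange_of_fundCct hB huB hfcu hbA hbu
    set B' := insert u (B \ {b}) with hB'def
    have hCB' : C \ B' = (C \ B) \ {u} := by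
      ext a
      simp only [hB'def, mem_diff, mem_insert_iff, mem_singleton_iff, not_or, mem_diff]
      constructor
      · rintro ⟨haC, hau, h2⟩
        exact ⟨⟨haC, fun haB => h2 ⟨haB, fun h => hbC (h ▸ haC)⟩⟩, hau⟩
      · rintro ⟨⟨haC, haB⟩, hau⟩
        exact ⟨haC, hau, fun h => haB h.1⟩
    set S' := S.erase u with hS'def
    have hS'coe : (S' : Set α) = C \ B' := by
      rw [hCB', ← hSC, hS'def, Finset.coe_erase]
    have hcardlt : S'.card < n := by
      rw [← hcard, hS'def]; exact Finset.card_erase_lt_of_mem huS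
    have hIH := IH _ hcardlt B' C S' hB' hC hS'coe rfl
    have hyfacts : ∀ y ∈ S', y ∈ M.E ∧ y ∉ B ∧ y ≠ u ∧ y ∉ B' := by
      intro y hyS'
      have hyu : y ≠ u := Finset.ne_of_mem_erase hyS'
      have hyCB : y ∈ C \ B := by
        rw [← hSC]; exact_mod_cast (Finset.mem_of_mem_erase hyS')
      refine ⟨circuit_subset_ground hC hyCB.1, hyCB.2, hyu, ?_⟩
      simp only [hB'def, mem_insert_iff, not_or, mem_diff]
      exact ⟨hyu, fun h => hyCB.2 h.1⟩
    have hterm : ∀ y ∈ S',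
        fc M y B' = (if b ∈ fc M y B then fc M u B else ∅) ∆ fc M y B := by
      intro y hyS'
      obtain ⟨hyE, hyB, hyu, hyB'⟩ := hyfacts y hyS'
      have hfcy : IsFundCct M (fc M y B) y B := fc_spec (exists_fundCct hB hyE hyB)
      by_cases hby : b ∈ fc M y B
      · rw [if_pos hby]
        have hfcy' : IsFundCct M (fc M y B') y B' := fc_spec (exists_fundCct hB' hyE hyB')
        exact hH B (fc M u B) (fc M y B) (fc M y B') b u y hB hbB huB hB' hyB hyu
          hfcu hfcy hbA hby hfcy'
      · rw [if_neg hby, empty_symmDiff']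
        symm
        refine eq_fc hB' hyB' ⟨hfcy.1, hfcy.2.1, ?_⟩
        intro a ha
        rcases hfcy.2.2 ha with h | h
        · exact h ▸ mem_insert _ _
        · exact mem_insert_of_mem _
            (mem_insert_of_mem _ ⟨h, fun hab => hby (hab ▸ ha)⟩)
    have hcongr : sdSum S' (fun y => fc M y B')
        = sdSum S' (fun y => (if b ∈ fc M y B then fc M u B else ∅) ∆ fc M y B) :=
      Finset.fold_congr hterm
    rw [hcongr, sdSum_symmDiff, sdSum_ite] at hIH
    by_cases heven : Even ((S'.filter (fun y => b ∈ fc M y B)).card)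
    · rw [if_pos heven, empty_symmDiff'] at hIH
      exfalso
      have hu : u ∉ sdSum S' (fun y => fc M y B) := by
        apply not_mem_sdSum
        intro y hyS' hmem
        obtain ⟨hyE, hyB, hyu, _⟩ := hyfacts y hyS'
        have hfcy : IsFundCct M (fc M y B) y B := fc_spec (exists_fundCct hB hyE hyB)
        rcases hfcy.2.2 hmem with h | h
        · exact hyu h.symm
        · exact huB h
      exact hu (hIH ▸ huC)
    · rw [if_neg heven] at hIH
      rw [hIH, show S = insert u S' from (Finset.insert_erase huS).symm,
        sdSum_insert (Finset.notMem_erase u S)]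
  · push_neg at hcase
    have hAC : fc M u B ⊆ C := by
      intro a ha
      by_cases hau : a = u
      · exact hau ▸ huC
      · exact hcase a ha hau
    have hCA : C = fc M u B := (circuit_eq_of_subset hC hfcu.1 hAC).symm
    have hS : S = {u} := by
      apply Finset.coe_injective
      rw [hSC, Finset.coe_singleton]
      ext a
      constructor
      · rintro ⟨haC, haB⟩
        rw [hCA] at haC
        rcases hfcu.2.2 haC with h | h
        · exact h
        · exact absurd h haB
      · rintro rfl; exact huCB
    rw [hS, show ({u} : Finset α) = insert u ∅ from rfl,
      sdSum_insert (Finset.notMem_empty u), sdSum_empty, hCA]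
    ext a; simp [Set.mem_symmDiff]

end BinAux


theorem stmt_14 (M : Matroid α) [M.Finite] :
    Binary M ↔
      ∀ (B Cx Cy Cy' : Set α) (b x y : α), M.IsBase B → b ∈ B → x ∉ B →
        M.IsBase (insert x (B \ {b})) → y ∉ B → y ≠ x →
        IsFundCct M Cx x B → IsFundCct M Cy y B → b ∈ Cx → b ∈ Cy →
        IsFundCct M Cy' y (insert x (B \ {b})) →
        Cy' = symmDiff Cx Cy := by
  constructor
  · intro hbin B Cx Cy Cy' b x y hB hbB hxB hB' hyB hyx hCx hCy hbCx hbCy hCy'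
    set B' := insert x (B \ {b}) with hB'def
    have hyB' : y ∉ B' := by
      simp only [hB'def, mem_insert_iff, mem_diff, not_or]
      exact ⟨hyx, fun h => hyB h.1⟩
    have hxCy : x ∉ Cy := by
      intro h
      rcases hCy.2.2 h with h | h
      · exact hyx h.symm
      · exact hxB h
    have hyCx : y ∉ Cx := by
      intro h
      rcases hCx.2.2 h with h | h
      · exact hyx h
      · exact hyB h
    have hbx : b ≠ x := fun h => hxB (h ▸ hbB)
    have hby : b ≠ y := fun h => hyB (h ▸ hbB)
    have hbB' : b ∉ B' := by
      simp [hB'def, hbx]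
    have hbCy' : b ∉ Cy' := by
      intro h
      rcases hCy'.2.2 h with h | h
      · exact hby h
      · exact hbB' h
    have hne1 : Cx ≠ Cy := fun h => hxCy (h ▸ hCx.2.1)
    obtain ⟨C, hCc, hCsub⟩ := hbin Cx Cy hCx.1 hCy.1 hne1
    have hsub1 : Cx ∆ Cy ⊆ insert y B' := by
      intro a ha
      rw [Set.mem_symmDiff] at ha
      have hab : a ≠ b := by
        rintro rfl
        rcases ha with ⟨_, h⟩ | ⟨_, h⟩
        exacts [h hbCy, h hbCx]
      rcases ha with ⟨h1, _⟩ | ⟨h1, _⟩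
      · rcases hCx.2.2 h1 with h | h
        · exact mem_insert_of_mem _ (h ▸ mem_insert _ _)
        · exact mem_insert_of_mem _ (mem_insert_of_mem _ ⟨h, hab⟩)
      · rcases hCy.2.2 h1 with h | h
        · exact h ▸ mem_insert _ _
        · exact mem_insert_of_mem _ (mem_insert_of_mem _ ⟨h, hab⟩)
    have hCC : C ⊆ insert y B' := hCsub.trans hsub1
    have hyC : y ∈ C := BinAux.mem_of_circuit_subset_insert hB'.indep hCc hCC
    have hCeq : C = Cy' := BinAux.fundCct_unique hB' hyB' ⟨hCc, hyC, hCC⟩ hCy'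
    have hsubA : Cy' ⊆ Cx ∆ Cy := hCeq ▸ hCsub
    have hxCy' : x ∈ Cy' := by
      by_contra hx
      have hsub : Cy' ⊆ insert y B := by
        intro a ha
        rcases hCy'.2.2 ha with h | h
        · exact h ▸ mem_insert _ _
        · rcases h with h | h
          · exact absurd (h ▸ ha) hx
          · exact mem_insert_of_mem _ h.1
      have heq : Cy' = Cy := BinAux.fundCct_unique hB hyB ⟨hCy'.1, hCy'.2.1, hsub⟩ hCy
      exact hbCy' (heq.symm ▸ hbCy)
    have hne2 : Cy' ≠ Cy := fun h => hbCy' (h.symm ▸ hbCy)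
    obtain ⟨C₂, hC₂c, hC₂sub⟩ := hbin Cy' Cy hCy'.1 hCy.1 hne2
    have hsub2 : Cy' ∆ Cy ⊆ insert x B := by
      intro a ha
      rw [Set.mem_symmDiff] at ha
      rcases ha with ⟨h1, h2⟩ | ⟨h1, h2⟩
      · have hay : a ≠ y := fun h => h2 (h ▸ hCy.2.1)
        rcases hCy'.2.2 h1 with h | h
        · exact absurd h hay
        · rcases h with h | h
          · exact h ▸ mem_insert _ _
          · exact mem_insert_of_mem _ h.1
      · have hay : a ≠ y := fun h => h2 (h ▸ hCy'.2.1)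
        rcases hCy.2.2 h1 with h | h
        · exact absurd h hay
        · exact mem_insert_of_mem _ h
    have hxC₂ : x ∈ C₂ :=
      BinAux.mem_of_circuit_subset_insert hB.indep hC₂c (hC₂sub.trans hsub2)
    have hC₂eq : C₂ = Cx :=
      BinAux.fundCct_unique hB hxB ⟨hC₂c, hxC₂, hC₂sub.trans hsub2⟩ hCx
    have hsubB : Cx ⊆ Cy' ∆ Cy := hC₂eq ▸ hC₂sub
    have hne3 : Cx ≠ Cy' := fun h => hyCx (h.symm ▸ hCy'.2.1)
    obtain ⟨C₃, hC₃c, hC₃sub⟩ := hbin Cx Cy' hCx.1 hCy'.1 hne3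
    have hsub3 : Cx ∆ Cy' ⊆ insert y B := by
      intro a ha
      rw [Set.mem_symmDiff] at ha
      rcases ha with ⟨h1, h2⟩ | ⟨h1, h2⟩
      · have hax : a ≠ x := fun h => h2 (h ▸ hxCy')
        rcases hCx.2.2 h1 with h | h
        · exact absurd h hax
        · exact mem_insert_of_mem _ h
      · have hax : a ≠ x := fun h => h2 (h ▸ hCx.2.1)
        rcases hCy'.2.2 h1 with h | h
        · exact h ▸ mem_insert _ _
        · rcases h with h | h
          · exact absurd h hax
          · exact mem_insert_of_mem _ h.1
    have hyC₃ : y ∈ C₃ :=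
      BinAux.mem_of_circuit_subset_insert hB.indep hC₃c (hC₃sub.trans hsub3)
    have hC₃eq : C₃ = Cy :=
      BinAux.fundCct_unique hB hyB ⟨hC₃c, hyC₃, hC₃sub.trans hsub3⟩ hCy
    have hsubC : Cy ⊆ Cx ∆ Cy' := hC₃eq ▸ hC₃sub
    ext a
    constructor
    · exact fun h => hsubA h
    · intro ha
      rw [Set.mem_symmDiff] at ha
      rcases ha with ⟨h1, h2⟩ | ⟨h1, h2⟩
      · rcases Set.mem_symmDiff.1 (hsubB h1) with ⟨h3, _⟩ | ⟨h3, _⟩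
        · exact h3
        · exact absurd h3 h2
      · rcases Set.mem_symmDiff.1 (hsubC h1) with ⟨h3, _⟩ | ⟨h3, _⟩
        · exact absurd h3 h2
        · exact h3
  · intro H C₁ C₂ h₁ h₂ hne
    by_contra hno
    push_neg at hno
    have hsubE : symmDiff C₁ C₂ ⊆ M.E :=
      (symmDiff_subset_union).trans
        (union_subset (BinAux.circuit_subset_ground h₁) (BinAux.circuit_subset_ground h₂))
    have hI : M.Indep (C₁ ∆ C₂) := by
      rw [← Matroid.not_dep_iff hsubE]
      intro hdep
      obtain ⟨C, hsub, hC⟩ := BinAux.exists_circuit_subset hdep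
      exact hno C hC hsub
    obtain ⟨B, hB, hIB⟩ := hI.exists_isBase_superset
    have key : C₁ \ B = C₂ \ B := by
      ext a
      constructor
      · rintro ⟨h1, h2⟩
        refine ⟨?_, h2⟩
        by_contra h3
        exact h2 (hIB (Set.mem_symmDiff.2 (Or.inl ⟨h1, h3⟩)))
      · rintro ⟨h1, h2⟩
        refine ⟨?_, h2⟩
        by_contra h3
        exact h2 (hIB (Set.mem_symmDiff.2 (Or.inr ⟨h1, h3⟩)))
    have hfin : (C₁ \ B).Finite :=
      M.set_finite _ (diff_subset.trans (BinAux.circuit_subset_ground h₁))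
    have e₁ := BinAux.circuit_eq_sdSum H _ B C₁ hfin.toFinset hB h₁
      (Set.Finite.coe_toFinset _) rfl
    have e₂ := BinAux.circuit_eq_sdSum H _ B C₂ hfin.toFinset hB h₂
      (by rw [Set.Finite.coe_toFinset]; exact key) rfl
    exact hne (e₁.trans e₂.symm)
end
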